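/- arXiv:1203.2602 — 6 statements merged into one kernel-verified Lean document; each statement's English description precedes it below -/
import Mathlib

section
/- Fix an integer d ≥ 3 and for λ > 0 let q_*(λ) ∈ (0,1) be the unique fixed point of F_λ. Then the function λ ↦ (d-1)^2 (1-q_*(λ))^2 (which equals the derivative of F_λ∘F_λ at q_*(λ)) is strictly increasing in λ and equals 1 exactly at λ = λ_c(d); consequently it is < 1 for λ < λ_c(d) and > 1 for λ > λ_c(d). -/
open Set

/-- The hard-core belief-propagation map `F_λ(q) = 1/(1 + λ q^{d-1})`. -/
noncomputable def hcF (d : ℕ) (lam q : ℝ) : ℝ := 1 / (1 + lam * q ^ (d - 1))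

/-- The critical fugacity `λ_c(d) = (d-1)^{d-1}/(d-2)^d`. -/
noncomputable def hcLamc (d : ℕ) : ℝ := ((d:ℝ) - 1) ^ (d - 1) / ((d:ℝ) - 2) ^ d

lemma hc_fix_eq (d : ℕ) (hd : 3 ≤ d) {lam q : ℝ} (hl : 0 < lam) (hq : q ∈ Ioo (0:ℝ) 1)
    (hf : hcF d lam q = q) : q + lam * q ^ d = 1 := by
  have hd1 : d - 1 + 1 = d := by omega
  have hX : 0 < lam * q ^ (d - 1) := mul_pos hl (pow_pos hq.1 _)
  have hpos : (1 + lam * q ^ (d - 1)) ≠ 0 := by linarith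
  unfold hcF at hf
  rw [div_eq_iff hpos] at hf
  have hpq : q ^ d = q ^ (d - 1) * q := by rw [← pow_succ, hd1]
  rw [hpq]; linear_combination -hf

theorem stmt1 (d : ℕ) (hd : 3 ≤ d) (qs : ℝ → ℝ)
    (hqs : ∀ lam : ℝ, 0 < lam →
      qs lam ∈ Ioo (0:ℝ) 1 ∧ hcF d lam (qs lam) = qs lam)
    (huniq : ∀ lam : ℝ, 0 < lam →
      ∀ q ∈ Ioo (0:ℝ) 1, hcF d lam q = q → q = qs lam) :
    StrictMonoOn (fun lam => ((d:ℝ) - 1) ^ 2 * (1 - qs lam) ^ 2) (Ioi 0) ∧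
    ((d:ℝ) - 1) ^ 2 * (1 - qs (hcLamc d)) ^ 2 = 1 ∧
    (∀ lam : ℝ, 0 < lam → lam < hcLamc d →
      ((d:ℝ) - 1) ^ 2 * (1 - qs lam) ^ 2 < 1) ∧
    (∀ lam : ℝ, hcLamc d < lam →
      1 < ((d:ℝ) - 1) ^ 2 * (1 - qs lam) ^ 2) := by
  have hd3 : (3:ℝ) ≤ (d:ℝ) := by exact_mod_cast hd
  have hb : (0:ℝ) < (d:ℝ) - 2 := by linarith
  have ha : (0:ℝ) < (d:ℝ) - 1 := by linarith
  have hd1 : d - 1 + 1 = d := by omega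
  -- qs strictly antitone
  have hanti : ∀ l1 ∈ Ioi (0:ℝ), ∀ l2 ∈ Ioi (0:ℝ), l1 < l2 → qs l2 < qs l1 := by
    intro l1 h1 l2 h2 h12
    obtain ⟨hm1, hf1⟩ := hqs l1 h1
    obtain ⟨hm2, hf2⟩ := hqs l2 h2
    have e1 := hc_fix_eq d hd h1 hm1 hf1
    have e2 := hc_fix_eq d hd h2 hm2 hf2
    by_contra hle
    push_neg at hle
    have hpow : qs l1 ^ d ≤ qs l2 ^ d := pow_le_pow_left₀ hm1.1.le hle d
    have hp2 : 0 < qs l2 ^ d := pow_pos hm2.1 d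
    have hA : l1 * qs l1 ^ d ≤ l1 * qs l2 ^ d :=
      mul_le_mul_of_nonneg_left hpow (le_of_lt (mem_Ioi.mp h1))
    have hB : l1 * qs l2 ^ d < l2 * qs l2 ^ d := by
      have := mul_lt_mul_of_pos_right h12 hp2
      linarith
    linarith
  -- lam_c positive
  have hlc : 0 < hcLamc d := div_pos (pow_pos ha _) (pow_pos hb _)
  -- fixed point at lam_c is (d-2)/(d-1)
  have hq0mem : ((d:ℝ)-2)/((d:ℝ)-1) ∈ Ioo (0:ℝ) 1 := by
    constructor
    · exact div_pos hb ha
    · rw [div_lt_one ha]; linarith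
  have hq0fix : hcF d (hcLamc d) (((d:ℝ)-2)/((d:ℝ)-1)) = ((d:ℝ)-2)/((d:ℝ)-1) := by
    unfold hcF hcLamc
    have hane : ((d:ℝ)-1) ≠ 0 := ne_of_gt ha
    have hbne : ((d:ℝ)-2) ≠ 0 := ne_of_gt hb
    have hapne : ((d:ℝ)-1) ^ (d-1) ≠ 0 := pow_ne_zero _ hane
    have hbpne : ((d:ℝ)-2) ^ (d-1) ≠ 0 := pow_ne_zero _ hbne
    rw [div_pow, show ((d:ℝ)-2)^d = ((d:ℝ)-2)^(d-1) * ((d:ℝ)-2) from by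
      rw [← pow_succ, hd1]]
    field_simp
    ring
  have hqsc : qs (hcLamc d) = ((d:ℝ)-2)/((d:ℝ)-1) :=
    (huniq (hcLamc d) hlc _ hq0mem hq0fix).symm
  have hval : 1 - qs (hcLamc d) = 1/((d:ℝ)-1) := by
    rw [hqsc]; field_simp; ring
  refine ⟨?_, ?_, ?_, ?_⟩
  · intro l1 h1 l2 h2 h12
    have hq1 := (hqs l1 h1).1
    have hq2 := (hqs l2 h2).1
    have := hanti l1 h1 l2 h2 h12
    simp only
    have h6 : 0 < 1 - qs l1 := by linarith [hq1.2]
    have h7 : 1 - qs l1 < 1 - qs l2 := by linarith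
    nlinarith [mul_pos (mul_pos ha ha)
      (mul_pos (by linarith : (0:ℝ) < (1 - qs l2) - (1 - qs l1))
               (by linarith : (0:ℝ) < (1 - qs l2) + (1 - qs l1)))]
  · rw [hval]; field_simp
  · intro lam hl hlt
    have hq := (hqs lam hl).1
    have hlt2 : qs (hcLamc d) < qs lam := hanti lam hl (hcLamc d) hlc hlt
    have h3 : 1 - qs lam < 1/((d:ℝ)-1) := by rw [← hval]; linarith
    have h4 : 0 < 1 - qs lam := by linarith [hq.2]
    have h5 : ((d:ℝ)-1) * (1 - qs lam) < 1 := by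
      rw [lt_div_iff₀ ha] at h3; linarith
    have h6 : 0 < ((d:ℝ)-1) * (1 - qs lam) := mul_pos ha h4
    nlinarith [h5, h6]
  · intro lam hlt
    have hl : 0 < lam := lt_trans hlc hlt
    have hq := (hqs lam hl).1
    have hlt2 : qs lam < qs (hcLamc d) := hanti (hcLamc d) hlc lam hl hlt
    have h3 : 1/((d:ℝ)-1) < 1 - qs lam := by rw [← hval]; linarith
    have h5 : 1 < ((d:ℝ)-1) * (1 - qs lam) := by
      rw [div_lt_iff₀ ha] at h3; linarith
    nlinarith [sq_nonneg (((d:ℝ)-1) * (1 - qs lam) - 1)]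
end

section
/- For every integer d ≥ 3 and every real λ > 0, the composition G_λ = F_λ ∘ F_λ has at most three fixed points in (0,1). -/
open Set

/-- Log of the fixed point equation `(1-q)(1+λq^{d-1})^{d-1} = λ q` for `F∘F`. -/
noncomputable def psiAux (d : ℕ) (lam q : ℝ) : ℝ :=
  Real.log (1 - q) + (d - 1 : ℕ) * Real.log (1 + lam * q ^ (d-1)) - Real.log (lam * q)

/-- Derivative of `psiAux`. -/
noncomputable def psiAux' (d : ℕ) (lam q : ℝ) : ℝ :=
  -1 / (1 - q) + (d - 1 : ℕ) * ((lam * ((d - 1 : ℕ) * q ^ (d-2))) / (1 + lam * q ^ (d-1)))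
    - lam / (lam * q)

/-- The unimodal function whose level set at 1 contains all critical points of `psiAux`. -/
noncomputable def phiAux (d : ℕ) (lam q : ℝ) : ℝ :=
  lam * q ^ (d-1) * (((d:ℝ) - 1)^2 * (1 - q) - 1)

lemma psiAux_zero (d : ℕ) (lam : ℝ) (hlam : 0 < lam) (q : ℝ)
    (hq : q ∈ Ioo (0:ℝ) 1) (h : hcF d lam (hcF d lam q) = q) : psiAux d lam q = 0 := by
  have hq0 := hq.1
  have h1 : (1:ℝ) - q ≠ 0 := by intro hc; linarith [hq.2]
  have hA : (1:ℝ) + lam * q ^ (d-1) ≠ 0 := by positivity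
  have hfp : (1 - q) * (1 + lam * q ^ (d-1)) ^ (d-1) = lam * q := by
    have hA2 : 0 < 1 + lam * q ^ (d-1) := by positivity
    have hAp : (0:ℝ) < (1 + lam * q ^ (d-1)) ^ (d-1) := by positivity
    unfold hcF at h
    rw [div_pow, one_pow] at h
    have hB : 0 < 1 + lam * (1 / (1 + lam * q ^ (d-1)) ^ (d-1)) := by positivity
    field_simp at h
    nlinarith [h]
  unfold psiAux
  rw [← Real.log_pow, ← Real.log_mul h1 (by positivity), hfp, sub_self]

lemma hasDerivAt_psiAux (d : ℕ) (hd : 3 ≤ d) (lam : ℝ) (hlam : 0 < lam) (q : ℝ)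
    (hq : q ∈ Ioo (0:ℝ) 1) : HasDerivAt (psiAux d lam) (psiAux' d lam q) q := by
  have hq0 := hq.1
  have h1 : (1:ℝ) - q ≠ 0 := by intro hc; linarith [hq.2]
  have hA : (1:ℝ) + lam * q ^ (d-1) ≠ 0 := by positivity
  have hlq : lam * q ≠ 0 := by positivity
  have d1 : HasDerivAt (fun q : ℝ => Real.log (1 - q)) (-1 / (1 - q)) q := by
    have := ((hasDerivAt_id q).const_sub 1).log h1
    simpa using this
  have d2 : HasDerivAt (fun q : ℝ => 1 + lam * q ^ (d-1)) (lam * ((d-1 : ℕ) * q ^ (d-1-1))) q :=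
    ((hasDerivAt_pow (d-1) q).const_mul lam).const_add 1
  have d2' : HasDerivAt (fun q : ℝ => ((d-1:ℕ) : ℝ) * Real.log (1 + lam * q ^ (d-1)))
      ((d-1:ℕ) * ((lam * ((d - 1 : ℕ) * q ^ (d-2))) / (1 + lam * q ^ (d-1)))) q := by
    have e : d - 1 - 1 = d - 2 := by omega
    rw [e] at d2
    exact (d2.log hA).const_mul _
  have d3 : HasDerivAt (fun q : ℝ => Real.log (lam * q)) (lam / (lam * q)) q := by
    have := ((hasDerivAt_id q).const_mul lam).log hlq
    simpa using this
  exact (d1.add d2').sub d3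

lemma psiAux'_zero (d : ℕ) (hd : 3 ≤ d) (lam : ℝ) (hlam : 0 < lam) (x : ℝ)
    (hx : x ∈ Ioo (0:ℝ) 1) (h : psiAux' d lam x = 0) : phiAux d lam x = 1 := by
  have hx0 := hx.1
  have hx1 := hx.2
  have h1 : (1:ℝ) - x ≠ 0 := by intro hc; linarith
  have hA : (1:ℝ) + lam * x ^ (d-1) ≠ 0 := by positivity
  have hx' : x ≠ 0 := ne_of_gt hx0
  have hl' : lam ≠ 0 := ne_of_gt hlam
  have hc : ((d - 1 : ℕ) : ℝ) = (d:ℝ) - 1 := by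
    have : (1:ℕ) ≤ d := by omega
    push_cast [Nat.cast_sub this]; ring
  have hp : x ^ (d-1) = x ^ (d-2) * x := by rw [← pow_succ]; congr 1; omega
  unfold psiAux' at h
  rw [hc] at h
  unfold phiAux
  field_simp at h
  rw [hp] at h ⊢
  have key : lam * (lam * (x^(d-2)*x) * (((d:ℝ)-1)^2*(1-x)-1)) = lam * 1 := by
    linear_combination lam * h
  exact mul_left_cancel₀ hl' key

lemma hasDerivAt_phiAux (d : ℕ) (hd : 3 ≤ d) (lam : ℝ) (q : ℝ) :
    HasDerivAt (phiAux d lam)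
      (lam * q ^ (d-2) * (((d:ℝ)-1) * (((d:ℝ)-1)^2 - 1) - ((d:ℝ)-1)^2 * d * q)) q := by
  have h1 : HasDerivAt (fun q : ℝ => lam * q ^ (d-1)) (lam * ((d-1:ℕ) * q ^ (d-1-1))) q :=
    (hasDerivAt_pow (d-1) q).const_mul lam
  have h2 : HasDerivAt (fun q : ℝ => ((d:ℝ) - 1)^2 * (1 - q) - 1) (-((d:ℝ)-1)^2) q := by
    have := (((hasDerivAt_id q).const_sub 1).const_mul (((d:ℝ)-1)^2)).sub_const 1
    simpa using this
  have := h1.mul h2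
  refine HasDerivAt.congr_deriv this ?_
  have hc : ((d - 1 : ℕ) : ℝ) = (d:ℝ) - 1 := by
    have : (1:ℕ) ≤ d := by omega
    push_cast [Nat.cast_sub this]; ring
  have e1 : d - 1 - 1 = d - 2 := by omega
  rw [hc, e1]
  have e3 : q ^ (d-1) = q ^ (d-2) * q := by rw [← pow_succ]; congr 1; omega
  rw [e3]; ring

lemma at_most_two (d : ℕ) (hd : 3 ≤ d) (lam : ℝ) (hlam : 0 < lam)
    (x1 x2 x3 : ℝ) (h1 : x1 ∈ Ioo (0:ℝ) 1) (h2 : x2 ∈ Ioo (0:ℝ) 1) (h3 : x3 ∈ Ioo (0:ℝ) 1)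
    (h12 : x1 < x2) (h23 : x2 < x3)
    (e1 : phiAux d lam x1 = 1) (e2 : phiAux d lam x2 = 1) (e3 : phiAux d lam x3 = 1) :
    False := by
  set c : ℝ := ((d:ℝ)-1)^2 with hc
  have hd3 : (3:ℝ) ≤ (d:ℝ) := by exact_mod_cast hd
  have hcpos : (1:ℝ) < c := by nlinarith
  have hdpos : (0:ℝ) < d := by linarith
  set qs : ℝ := (((d:ℝ)-1) * (c - 1)) / (c * d) with hqs
  have hqspos : 0 < qs := by
    apply div_pos
    · nlinarith
    · nlinarith
  have hderiv : ∀ q : ℝ, deriv (phiAux d lam) q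
      = lam * q ^ (d-2) * (((d:ℝ)-1) * (c - 1) - c * d * q) := by
    intro q
    have := (hasDerivAt_phiAux d hd lam q).deriv
    rw [this]
  have hcont : Continuous (phiAux d lam) := by
    have : Differentiable ℝ (phiAux d lam) := fun q => (hasDerivAt_phiAux d hd lam q).differentiableAt
    exact this.continuous
  have hmono : StrictMonoOn (phiAux d lam) (Icc 0 qs) := by
    apply strictMonoOn_of_deriv_pos (convex_Icc 0 qs) hcont.continuousOn
    intro x hx
    rw [interior_Icc] at hx
    rw [hderiv]
    have hx0 : 0 < x := hx.1
    have hxq : x < qs := hx.2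
    have hb : 0 < ((d:ℝ)-1) * (c - 1) - c * d * x := by
      have h' : c * d * x < c * d * qs := by
        apply mul_lt_mul_of_pos_left hxq; positivity
      have hq : c * d * qs = ((d:ℝ)-1) * (c-1) := by
        rw [hqs]; field_simp
      linarith
    positivity
  have hanti : StrictAntiOn (phiAux d lam) (Ici qs) := by
    apply strictAntiOn_of_deriv_neg (convex_Ici qs) hcont.continuousOn
    intro x hx
    rw [interior_Ici] at hx
    rw [hderiv]
    have hx0 : 0 < x := lt_trans hqspos hx
    have hb : ((d:ℝ)-1) * (c - 1) - c * d * x < 0 := by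
      have h' : c * d * qs < c * d * x := by
        apply mul_lt_mul_of_pos_left hx; positivity
      have hq : c * d * qs = ((d:ℝ)-1) * (c-1) := by
        rw [hqs]; field_simp
      linarith
    have hxp : (0:ℝ) < lam * x ^ (d-2) := by positivity
    nlinarith
  rcases le_total x2 qs with hle | hle
  · have := hmono ⟨le_of_lt h1.1, le_of_lt (lt_of_lt_of_le h12 hle)⟩ ⟨le_of_lt h2.1, hle⟩ h12
    rw [e1, e2] at this; exact lt_irrefl 1 this
  · have := hanti hle (le_trans hle (le_of_lt h23)) h23
    rw [e2, e3] at this; exact lt_irrefl 1 this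

lemma rolle_step (d : ℕ) (hd : 3 ≤ d) (lam : ℝ) (hlam : 0 < lam) (a b : ℝ)
    (ha : a ∈ Ioo (0:ℝ) 1) (hb : b ∈ Ioo (0:ℝ) 1) (hab : a < b)
    (hpa : psiAux d lam a = 0) (hpb : psiAux d lam b = 0) :
    ∃ x ∈ Ioo a b, x ∈ Ioo (0:ℝ) 1 ∧ phiAux d lam x = 1 := by
  have hsub : Icc a b ⊆ Ioo (0:ℝ) 1 := fun x hx =>
    ⟨lt_of_lt_of_le ha.1 hx.1, lt_of_le_of_lt hx.2 hb.2⟩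
  have hcont : ContinuousOn (psiAux d lam) (Icc a b) := fun x hx =>
    (hasDerivAt_psiAux d hd lam hlam x (hsub hx)).continuousAt.continuousWithinAt
  obtain ⟨c, hc, hc0⟩ := exists_hasDerivAt_eq_zero hab hcont (by rw [hpa, hpb])
    (fun x hx => hasDerivAt_psiAux d hd lam hlam x (hsub (Ioo_subset_Icc_self hx)))
  have hc01 : c ∈ Ioo (0:ℝ) 1 := hsub (Ioo_subset_Icc_self hc)
  exact ⟨c, hc, hc01, psiAux'_zero d hd lam hlam c hc01 hc0⟩

theorem stmt2 (d : ℕ) (hd : 3 ≤ d) (lam : ℝ) (hlam : 0 < lam) :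
    {q ∈ Ioo (0:ℝ) 1 | hcF d lam (hcF d lam q) = q}.encard ≤ 3 := by
  by_contra h
  push_neg at h
  have h4 : (4 : ℕ∞) ≤ {q ∈ Ioo (0:ℝ) 1 | hcF d lam (hcF d lam q) = q}.encard := by
    exact Order.add_one_le_of_lt h
  obtain ⟨t, hts, ht⟩ := Set.exists_subset_encard_eq h4
  have hfin : t.Finite := Set.finite_of_encard_eq_coe (k := 4) (by exact_mod_cast ht)
  have hcard : hfin.toFinset.card = 4 := by
    have := hfin.encard_eq_coe_toFinset_card
    rw [ht] at this
    exact_mod_cast this.symm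
  set f := hfin.toFinset.orderEmbOfFin hcard with hf
  have hmem : ∀ i : Fin 4, f i ∈ {q ∈ Ioo (0:ℝ) 1 | hcF d lam (hcF d lam q) = q} := by
    intro i
    apply hts
    rw [← hfin.mem_toFinset]
    exact Finset.orderEmbOfFin_mem _ hcard i
  have hpsi : ∀ i : Fin 4, psiAux d lam (f i) = 0 := fun i =>
    psiAux_zero d lam hlam _ (hmem i).1 (hmem i).2
  have hlt : ∀ i j : Fin 4, i < j → f i < f j := fun i j hij => f.strictMono hij
  obtain ⟨y1, hy1, hy1I, hy1p⟩ := rolle_step d hd lam hlam (f 0) (f 1)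
    (hmem 0).1 (hmem 1).1 (hlt 0 1 (by decide)) (hpsi 0) (hpsi 1)
  obtain ⟨y2, hy2, hy2I, hy2p⟩ := rolle_step d hd lam hlam (f 1) (f 2)
    (hmem 1).1 (hmem 2).1 (hlt 1 2 (by decide)) (hpsi 1) (hpsi 2)
  obtain ⟨y3, hy3, hy3I, hy3p⟩ := rolle_step d hd lam hlam (f 2) (f 3)
    (hmem 2).1 (hmem 3).1 (hlt 2 3 (by decide)) (hpsi 2) (hpsi 3)
  exact at_most_two d hd lam hlam y1 y2 y3 hy1I hy2I hy3I
    (lt_trans hy1.2 hy2.1) (lt_trans hy2.2 hy3.1) hy1p hy2p hy3p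
end

section
/- Fix an integer d ≥ 3. For 0 < λ ≤ λ_c(d), the unique fixed point q_*(λ) of F_λ is also the only fixed point of G_λ = F_λ ∘ F_λ in (0,1). For λ > λ_c(d), G_λ has exactly three fixed points q^-(λ) < q_*(λ) < q^+(λ) in (0,1), and F_λ interchanges the outer two: F_λ(q^+(λ)) = q^-(λ) and F_λ(q^-(λ)) = q^+(λ). -/
open Set

namespace HCaux

noncomputable def psi (n : ℕ) (lam q : ℝ) : ℝ :=
  n * Real.log (1 + lam * q ^ n) + Real.log (1 - q) - Real.log lam - Real.log q

noncomputable def mf (n : ℕ) (lam q : ℝ) : ℝ :=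
  lam * q ^ n * ((n:ℝ)^2 * (1 - q) - 1) - 1

noncomputable def lamc (n : ℕ) : ℝ := (n:ℝ)^n / ((n:ℝ) - 1)^(n+1)

noncomputable def qbar (n : ℕ) : ℝ := ((n:ℝ) - 1) / n

variable {n : ℕ} {lam : ℝ}

lemma hA_pos (hlam : 0 < lam) {q : ℝ} (hq : 0 < q) : 0 < 1 + lam * q ^ n := by positivity

lemma F_mem (hlam : 0 < lam) {q : ℝ} (hq : q ∈ Ioo (0:ℝ) 1) :
    1 / (1 + lam * q ^ n) ∈ Ioo (0:ℝ) 1 := by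
  have hA : 0 < 1 + lam * q ^ n := hA_pos hlam hq.1
  constructor
  · positivity
  · rw [div_lt_one hA]
    nlinarith [pow_pos hq.1 n]

lemma G_eq_iff (hlam : 0 < lam) {q : ℝ} (hq : q ∈ Ioo (0:ℝ) 1) :
    (1 / (1 + lam * (1 / (1 + lam * q ^ n)) ^ n) = q) ↔
      (1 - q) * (1 + lam * q ^ n) ^ n = lam * q := by
  have hA : 0 < 1 + lam * q ^ n := hA_pos hlam hq.1
  have hAn : 0 < (1 + lam * q ^ n) ^ n := pow_pos hA n
  have key : 1 + lam * (1 / (1 + lam * q ^ n)) ^ n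
      = ((1 + lam * q ^ n) ^ n + lam) / (1 + lam * q ^ n) ^ n := by
    field_simp
    rw [one_div, inv_pow, add_mul, one_mul, mul_assoc, inv_mul_cancel₀ (ne_of_gt hAn), mul_one]
  rw [key, one_div_div]
  have hden : 0 < (1 + lam * q ^ n) ^ n + lam := add_pos hAn hlam
  rw [div_eq_iff (ne_of_gt hden)]
  constructor <;> intro h <;> nlinarith [h]

lemma psi_eq_zero_iff (hlam : 0 < lam) {q : ℝ} (hq : q ∈ Ioo (0:ℝ) 1) :
    psi n lam q = 0 ↔ (1 - q) * (1 + lam * q ^ n) ^ n = lam * q := by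
  have hA : 0 < 1 + lam * q ^ n := hA_pos hlam hq.1
  have h1q : (0:ℝ) < 1 - q := by linarith [hq.2]
  have hX : 0 < (1 - q) * (1 + lam * q ^ n) ^ n := mul_pos h1q (pow_pos hA n)
  have hY : 0 < lam * q := mul_pos hlam hq.1
  have hrw : psi n lam q =
      Real.log ((1 - q) * (1 + lam * q ^ n) ^ n) - Real.log (lam * q) := by
    rw [Real.log_mul (ne_of_gt h1q) (ne_of_gt (pow_pos hA n)),
      Real.log_mul (ne_of_gt hlam) (ne_of_gt hq.1), Real.log_pow]
    simp [psi]; ring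
  rw [hrw, sub_eq_zero]
  constructor
  · intro h
    have := congrArg Real.exp h
    rwa [Real.exp_log hX, Real.exp_log hY] at this
  · intro h; rw [h]

lemma hasDerivAt_psi (hn : 1 ≤ n) (hlam : 0 < lam) {q : ℝ} (hq : q ∈ Ioo (0:ℝ) 1) :
    HasDerivAt (psi n lam) (mf n lam q / (q * (1 - q) * (1 + lam * q ^ n))) q := by
  obtain ⟨k, rfl⟩ : ∃ k, n = k + 1 := ⟨n - 1, (Nat.succ_pred_eq_of_pos hn).symm⟩
  have hq0 := hq.1
  have h1q : (0:ℝ) < 1 - q := by linarith [hq.2]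
  have hA : 0 < 1 + lam * q ^ (k+1) := hA_pos hlam hq0
  have h1 : HasDerivAt (fun x : ℝ => 1 + lam * x ^ (k+1)) (lam * ((k+1) * q ^ k)) q := by
    simpa using ((hasDerivAt_pow (k+1) q).const_mul lam).const_add 1
  have h2 : HasDerivAt (fun x : ℝ => 1 - x) (-1 : ℝ) q := by
    simpa using (hasDerivAt_id q).const_sub 1
  have h3 := ((h1.log (ne_of_gt hA)).const_mul (((k+1:ℕ)):ℝ)).add (h2.log (ne_of_gt h1q))
  have h4 := (h3.sub_const (Real.log lam)).sub (Real.hasDerivAt_log (ne_of_gt hq0))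
  refine h4.congr_deriv ?_
  simp only [mf]
  push_cast
  field_simp
  ring

lemma hasDerivAt_mf (hn : 1 ≤ n) {q : ℝ} :
    HasDerivAt (mf n lam)
      (lam * ((n:ℝ) * ((n:ℝ)+1)) * q ^ (n-1) * (((n:ℝ)-1) - (n:ℝ)*q)) q := by
  obtain ⟨k, rfl⟩ : ∃ k, n = k + 1 := ⟨n - 1, (Nat.succ_pred_eq_of_pos hn).symm⟩
  have h1 : HasDerivAt (fun x:ℝ => x ^ (k+1)) (((k:ℝ)+1) * q ^ k) q := by
    simpa using hasDerivAt_pow (k+1) q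
  have h2 : HasDerivAt (fun x:ℝ => ((k+1:ℕ):ℝ)^2 * (1-x) - 1) (-(((k+1:ℕ):ℝ)^2)) q := by
    have := (((hasDerivAt_id q).const_sub 1).const_mul (((k+1:ℕ):ℝ)^2)).sub_const 1
    simpa using this
  have h3 := ((h1.const_mul lam).mul h2).sub_const 1
  refine h3.congr_deriv ?_
  simp only [Nat.add_sub_cancel]
  push_cast
  ring

lemma cont_mf : Continuous (mf n lam) := by unfold mf; continuity

lemma qbar_mem (hn : 2 ≤ n) : qbar n ∈ Ioo (0:ℝ) 1 := by
  have h2 : (2:ℝ) ≤ n := by exact_mod_cast hn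
  constructor
  · apply div_pos <;> linarith
  · rw [qbar, div_lt_one (by linarith)]; linarith

lemma mf_strictMonoOn (hn : 2 ≤ n) (hlam : 0 < lam) :
    StrictMonoOn (mf n lam) (Icc 0 (qbar n)) := by
  have h2 : (2:ℝ) ≤ n := by exact_mod_cast hn
  apply strictMonoOn_of_deriv_pos (convex_Icc _ _) cont_mf.continuousOn
  intro x hx
  rw [interior_Icc] at hx
  rw [(hasDerivAt_mf (by omega)).deriv]
  have hx0 : 0 < x := hx.1
  have hxq : x < qbar n := hx.2
  have hxn : x * n < (n:ℝ) - 1 := by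
    rw [qbar, lt_div_iff₀ (by linarith)] at hxq; exact hxq
  have h5 : 0 < ((n:ℝ) - 1) - n * x := by nlinarith
  have h6 : (0:ℝ) < (n:ℝ) * ((n:ℝ)+1) := by nlinarith
  exact mul_pos (mul_pos (mul_pos hlam h6) (pow_pos hx0 _)) h5

lemma mf_strictAntiOn (hn : 2 ≤ n) (hlam : 0 < lam) :
    StrictAntiOn (mf n lam) (Icc (qbar n) 1) := by
  have h2 : (2:ℝ) ≤ n := by exact_mod_cast hn
  apply strictAntiOn_of_deriv_neg (convex_Icc _ _) cont_mf.continuousOn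
  intro x hx
  rw [interior_Icc] at hx
  rw [(hasDerivAt_mf (by omega)).deriv]
  have hq := qbar_mem hn
  have hx0 : 0 < x := hq.1.trans hx.1
  have hxn : (n:ℝ) - 1 < x * n := by
    have h := hx.1
    rw [qbar, div_lt_iff₀ (by linarith)] at h
    exact h
  have h5 : ((n:ℝ) - 1) - n * x < 0 := by nlinarith
  have h6 : (0:ℝ) < (n:ℝ) * ((n:ℝ)+1) := by nlinarith
  have := mul_pos (mul_pos hlam h6) (pow_pos hx0 (n-1))
  exact mul_neg_of_pos_of_neg this h5

lemma mf_qbar_eq (hn : 2 ≤ n) :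
    mf n lam (qbar n) = (lam - lamc n) * (((n:ℝ)-1)^(n+1)/(n:ℝ)^n) := by
  have h2 : (2:ℝ) ≤ n := by exact_mod_cast hn
  have hn0 : (n:ℝ) ≠ 0 := by linarith
  have hn1 : (n:ℝ) - 1 ≠ 0 := by linarith
  simp only [mf, lamc, qbar]
  rw [div_pow]
  field_simp
  ring

lemma lamc_pos (hn : 2 ≤ n) : 0 < lamc n := by
  have h2 : (2:ℝ) ≤ n := by exact_mod_cast hn
  apply div_pos (pow_pos (by linarith) _) (pow_pos (by linarith) _)

lemma lamc_eq (hn : 2 ≤ n) : lamc n = (1 - qbar n) / (qbar n)^(n+1) := by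
  have h2 : (2:ℝ) ≤ n := by exact_mod_cast hn
  have hn0 : (n:ℝ) ≠ 0 := by linarith
  have hn1 : (n:ℝ) - 1 ≠ 0 := by linarith
  have hp1 : ((n:ℝ)-1)^(n+1) ≠ 0 := pow_ne_zero _ hn1
  have hp2 : (n:ℝ)^(n+1) ≠ 0 := pow_ne_zero _ hn0
  simp only [lamc, qbar]
  rw [div_pow]
  field_simp
  ring

lemma fix_eq (hlam : 0 < lam) {p : ℝ} (hpm : p ∈ Ioo (0:ℝ) 1)
    (hpf : 1 / (1 + lam * p ^ n) = p) : lam * p ^ (n+1) = 1 - p := by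
  have hA : 0 < 1 + lam * p ^ n := hA_pos hlam hpm.1
  rw [div_eq_iff (ne_of_gt hA)] at hpf
  rw [pow_succ]
  linear_combination -hpf

lemma cont_psi (hlam : 0 < lam) : ContinuousOn (psi n lam) (Ioo 0 1) := by
  unfold psi
  apply ContinuousOn.sub
  apply ContinuousOn.sub
  apply ContinuousOn.add
  · exact continuousOn_const.mul (ContinuousOn.log (by fun_prop)
      (fun x hx => ne_of_gt (hA_pos hlam hx.1)))
  · exact ContinuousOn.log (by fun_prop) (fun x hx => by
      have := hx.2; intro h; simp only [mem_Ioo] at *; nlinarith)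
  · exact continuousOn_const
  · exact Real.continuousOn_log.mono (fun x hx => ne_of_gt hx.1)

lemma glue_anti {f : ℝ → ℝ} {a b c : ℝ} (hb : b ∈ Ioo a c)
    (h1 : StrictAntiOn f (Ioc a b)) (h2 : StrictAntiOn f (Ico b c)) :
    StrictAntiOn f (Ioo a c) := by
  intro x hx y hy hxy
  rcases le_or_gt y b with h | h
  · exact h1 ⟨hx.1, hxy.le.trans h⟩ ⟨hy.1, h⟩ hxy
  rcases le_or_gt x b with h' | h'
  · rcases eq_or_lt_of_le h' with rfl | h''
    · exact h2 ⟨le_refl _, hb.2⟩ ⟨h.le, hy.2⟩ h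
    · exact lt_trans (h2 ⟨le_refl _, hb.2⟩ ⟨h.le, hy.2⟩ h) (h1 ⟨hx.1, h'⟩ ⟨hb.1, le_refl _⟩ h'')
  · exact h2 ⟨h'.le, hx.2⟩ ⟨(h'.trans hxy).le, hy.2⟩ hxy

lemma psi_anti (hn : 2 ≤ n) (hlam : 0 < lam) {s : Set ℝ} (hconv : Convex ℝ s)
    (hsub : s ⊆ Ioo 0 1) (hm : ∀ x ∈ interior s, mf n lam x < 0) :
    StrictAntiOn (psi n lam) s := by
  apply strictAntiOn_of_deriv_neg hconv ((cont_psi (n := n) hlam).mono hsub)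
  intro x hx
  have hxm : x ∈ Ioo (0:ℝ) 1 := hsub (interior_subset hx)
  rw [(hasDerivAt_psi (by omega) hlam hxm).deriv]
  have h1 : 0 < x * (1-x) * (1+lam*x^n) :=
    mul_pos (mul_pos hxm.1 (by linarith [hxm.2])) (hA_pos hlam hxm.1)
  exact div_neg_of_neg_of_pos (hm x hx) h1

lemma psi_mono (hn : 2 ≤ n) (hlam : 0 < lam) {s : Set ℝ} (hconv : Convex ℝ s)
    (hsub : s ⊆ Ioo 0 1) (hm : ∀ x ∈ interior s, 0 < mf n lam x) :
    StrictMonoOn (psi n lam) s := by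
  apply strictMonoOn_of_deriv_pos hconv ((cont_psi (n := n) hlam).mono hsub)
  intro x hx
  have hxm : x ∈ Ioo (0:ℝ) 1 := hsub (interior_subset hx)
  rw [(hasDerivAt_psi (by omega) hlam hxm).deriv]
  have h1 : 0 < x * (1-x) * (1+lam*x^n) :=
    mul_pos (mul_pos hxm.1 (by linarith [hxm.2])) (hA_pos hlam hxm.1)
  exact div_pos (hm x hx) h1

set_option maxHeartbeats 1000000 in
lemma partA (hn : 2 ≤ n) (hlam : 0 < lam) (hle : lam ≤ lamc n) {p q : ℝ}
    (hpm : p ∈ Ioo (0:ℝ) 1) (hpf : 1 / (1 + lam * p ^ n) = p) (hqm : q ∈ Ioo (0:ℝ) 1)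
    (hG : 1 / (1 + lam * (1 / (1 + lam * q ^ n)) ^ n) = q) : q = p := by
  have h2 : (2:ℝ) ≤ n := by exact_mod_cast hn
  have hqb := qbar_mem hn
  have hmqb : mf n lam (qbar n) ≤ 0 := by
    rw [mf_qbar_eq hn]
    have h1 : lam - lamc n ≤ 0 := by linarith
    have h2' : (0:ℝ) < ((n:ℝ)-1)^(n+1)/(n:ℝ)^n :=
      div_pos (pow_pos (by linarith) _) (pow_pos (by linarith) _)
    exact mul_nonpos_of_nonpos_of_nonneg h1 h2'.le
  have hneg : ∀ x ∈ Ioo (0:ℝ) 1, x ≠ qbar n → mf n lam x < 0 := by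
    intro x hx hne
    rcases lt_or_gt_of_ne hne with h | h
    · have := mf_strictMonoOn hn hlam ⟨hx.1.le, h.le⟩ ⟨hqb.1.le, le_rfl⟩ h
      linarith
    · have := mf_strictAntiOn hn hlam ⟨le_rfl, hqb.2.le⟩ ⟨h.le, hx.2.le⟩ h
      linarith
  have hanti1 : StrictAntiOn (psi n lam) (Ioc 0 (qbar n)) := by
    apply psi_anti hn hlam (convex_Ioc _ _)
      (fun x hx => ⟨hx.1, lt_of_le_of_lt hx.2 hqb.2⟩)
    intro x hx
    rw [interior_Ioc] at hx
    exact hneg x ⟨hx.1, hx.2.trans hqb.2⟩ (ne_of_lt hx.2)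
  have hanti2 : StrictAntiOn (psi n lam) (Ico (qbar n) 1) := by
    apply psi_anti hn hlam (convex_Ico _ _)
      (fun x hx => ⟨lt_of_lt_of_le hqb.1 hx.1, hx.2⟩)
    intro x hx
    rw [interior_Ico] at hx
    exact hneg x ⟨hqb.1.trans hx.1, hx.2⟩ (ne_of_gt hx.1)
  have hanti : StrictAntiOn (psi n lam) (Ioo 0 1) := glue_anti hqb hanti1 hanti2
  have hGp : 1 / (1 + lam * (1 / (1 + lam * p ^ n)) ^ n) = p := by rw [hpf]; exact hpf
  have hp0 : psi n lam p = 0 := (psi_eq_zero_iff hlam hpm).mpr ((G_eq_iff hlam hpm).mp hGp)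
  have hq0 : psi n lam q = 0 := (psi_eq_zero_iff hlam hqm).mpr ((G_eq_iff hlam hqm).mp hG)
  exact hanti.injOn hqm hpm (by rw [hp0, hq0])

set_option maxHeartbeats 2000000 in
lemma partB (hn : 2 ≤ n) (hlam : 0 < lam) (hgt : lamc n < lam) {p : ℝ}
    (hpm : p ∈ Ioo (0:ℝ) 1) (hpf : 1 / (1 + lam * p ^ n) = p)
    (huF : ∀ q ∈ Ioo (0:ℝ) 1, 1 / (1 + lam * q ^ n) = q → q = p) :
    ∃ qm qp : ℝ, qm ∈ Ioo (0:ℝ) 1 ∧ qp ∈ Ioo (0:ℝ) 1 ∧ qm < p ∧ p < qp ∧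
      (1 / (1 + lam * (1 / (1 + lam * qm ^ n)) ^ n) = qm) ∧
      (1 / (1 + lam * (1 / (1 + lam * qp ^ n)) ^ n) = qp) ∧
      (1 / (1 + lam * qp ^ n) = qm) ∧ (1 / (1 + lam * qm ^ n) = qp) ∧
      (∀ q ∈ Ioo (0:ℝ) 1, (1 / (1 + lam * (1 / (1 + lam * q ^ n)) ^ n) = q) →
        q = qm ∨ q = p ∨ q = qp) := by
  have h2 : (2:ℝ) ≤ n := by exact_mod_cast hn
  have hqb := qbar_mem hn
  -- m positive at qbar
  have hmqb : 0 < mf n lam (qbar n) := by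
    rw [mf_qbar_eq hn]
    have h2' : (0:ℝ) < ((n:ℝ)-1)^(n+1)/(n:ℝ)^n :=
      div_pos (pow_pos (by linarith) _) (pow_pos (by linarith) _)
    exact mul_pos (by linarith) h2'
  have hfe := fix_eq hlam hpm hpf
  -- p < qbar
  have hplt : p < qbar n := by
    by_contra hcon
    push_neg at hcon
    have h1 : lam * (qbar n)^(n+1) ≤ lam * p^(n+1) :=
      mul_le_mul_of_nonneg_left (pow_le_pow_left₀ hqb.1.le hcon _) hlam.le
    have h3 : lamc n * (qbar n)^(n+1) = 1 - qbar n := by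
      rw [lamc_eq hn]
      exact div_mul_cancel₀ _ (pow_ne_zero _ (ne_of_gt hqb.1))
    have h4 : lam * (qbar n)^(n+1) ≤ lamc n * (qbar n)^(n+1) := by
      rw [h3]; linarith
    have := (mul_le_mul_iff_left₀ (pow_pos hqb.1 (n+1))).mp h4
    linarith
  -- m positive at p
  have hmp : 0 < mf n lam p := by
    have hp0 := hpm.1
    have hfe' : lam * p^n * p = 1 - p := by rw [← hfe, pow_succ, mul_assoc]
    have key : mf n lam p * p = (n:ℝ)^2*(1-p)^2 - 1 := by
      simp only [mf]
      linear_combination ((n:ℝ)^2*(1-p)-1) * hfe'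
    have h5 : 1 < (n:ℝ)*(1-p) := by
      have h := hplt
      rw [qbar, lt_div_iff₀ (by linarith)] at h
      nlinarith
    have h6 : 0 < (n:ℝ)^2*(1-p)^2 - 1 := by nlinarith
    nlinarith [key]
  -- zero a of m in (0, qbar)
  have hm0 : mf n lam 0 = -1 := by
    simp [mf, zero_pow (by omega : n ≠ 0)]
  have hm1 : mf n lam 1 = -lam - 1 := by norm_num [mf]
  obtain ⟨a, ham, ha⟩ : ∃ a ∈ Ioo (0:ℝ) (qbar n), mf n lam a = 0 := by
    have h := intermediate_value_Ioo (a := (0:ℝ)) (b := qbar n) hqb.1.le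
      (cont_mf (n := n) (lam := lam)).continuousOn
    have h0 : (0:ℝ) ∈ Ioo (mf n lam 0) (mf n lam (qbar n)) := by
      rw [hm0]; exact ⟨by norm_num, hmqb⟩
    obtain ⟨x, hx1, hx2⟩ := h h0
    exact ⟨x, hx1, hx2⟩
  obtain ⟨b, hbm, hb⟩ : ∃ b ∈ Ioo (qbar n) (1:ℝ), mf n lam b = 0 := by
    have h := intermediate_value_Ioo' (a := qbar n) (b := (1:ℝ)) hqb.2.le
      (cont_mf (n := n) (lam := lam)).continuousOn
    have h0 : (0:ℝ) ∈ Ioo (mf n lam 1) (mf n lam (qbar n)) := by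
      rw [hm1]; exact ⟨by linarith, hmqb⟩
    obtain ⟨x, hx1, hx2⟩ := h h0
    exact ⟨x, hx1, hx2⟩
  have ha0 : 0 < a := ham.1
  have hab : a < b := ham.2.trans hbm.1
  have hb1 : b < 1 := hbm.2
  have ha1 : a < 1 := hab.trans hb1
  have hb0 : 0 < b := ha0.trans hab
  -- sign of m on pieces
  have hm_pos : ∀ x, a < x → x < b → 0 < mf n lam x := by
    intro x h1 h2'
    rcases le_or_gt x (qbar n) with h | h
    · have := mf_strictMonoOn hn hlam ⟨ha0.le, ham.2.le⟩ ⟨(ha0.trans h1).le, h⟩ h1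
      rw [ha] at this; exact this
    · have := mf_strictAntiOn hn hlam ⟨h.le, (h2'.trans hb1).le⟩ ⟨hbm.1.le, hb1.le⟩ h2'
      rw [hb] at this; exact this
  have hm_neg_lo : ∀ x, 0 < x → x < a → mf n lam x < 0 := by
    intro x h1 h2'
    have := mf_strictMonoOn hn hlam ⟨h1.le, (h2'.trans ham.2).le⟩ ⟨ha0.le, ham.2.le⟩ h2'
    rw [ha] at this; exact this
  have hm_neg_hi : ∀ x, b < x → x < 1 → mf n lam x < 0 := by
    intro x h1 h2'
    have := mf_strictAntiOn hn hlam ⟨hbm.1.le, hb1.le⟩ ⟨(hbm.1.trans h1).le, h2'.le⟩ h1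
    rw [hb] at this; exact this
  -- p in (a, b)
  have hpa : a < p := by
    rcases lt_trichotomy p a with h | h | h
    · linarith [hm_neg_lo p hpm.1 h]
    · rw [h] at hmp; rw [ha] at hmp; exact absurd hmp (lt_irrefl 0)
    · exact h
  have hpb : p < b := by
    rcases lt_trichotomy b p with h | h | h
    · linarith [hm_neg_hi p h hpm.2]
    · rw [← h] at hmp; rw [hb] at hmp; exact absurd hmp (lt_irrefl 0)
    · exact h
  -- psi fixed point value
  have hGp : 1 / (1 + lam * (1 / (1 + lam * p ^ n)) ^ n) = p := by rw [hpf]; exact hpf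
  have hpsi0 : psi n lam p = 0 := (psi_eq_zero_iff hlam hpm).mpr ((G_eq_iff hlam hpm).mp hGp)
  -- psi monotone pieces
  have hmono : StrictMonoOn (psi n lam) (Icc a b) := by
    apply psi_mono hn hlam (convex_Icc _ _)
      (fun x hx => ⟨lt_of_lt_of_le ha0 hx.1, lt_of_le_of_lt hx.2 hb1⟩)
    intro x hx
    rw [interior_Icc] at hx
    exact hm_pos x hx.1 hx.2
  have hanti1 : StrictAntiOn (psi n lam) (Ioc 0 a) := by
    apply psi_anti hn hlam (convex_Ioc _ _)
      (fun x hx => ⟨hx.1, lt_of_le_of_lt hx.2 ha1⟩)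
    intro x hx
    rw [interior_Ioc] at hx
    exact hm_neg_lo x hx.1 hx.2
  have hanti2 : StrictAntiOn (psi n lam) (Ico b 1) := by
    apply psi_anti hn hlam (convex_Ico _ _)
      (fun x hx => ⟨lt_of_lt_of_le hb0 hx.1, hx.2⟩)
    intro x hx
    rw [interior_Ico] at hx
    exact hm_neg_hi x hx.1 hx.2
  have hpsia : psi n lam a < 0 := by
    have := hmono ⟨le_rfl, hab.le⟩ ⟨hpa.le, hpb.le⟩ hpa
    rwa [hpsi0] at this
  have hpsib : 0 < psi n lam b := by
    have := hmono ⟨hpa.le, hpb.le⟩ ⟨hab.le, le_rfl⟩ hpb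
    rwa [hpsi0] at this
  -- point q0 with psi > 0 below a
  set q0 := min (a/2) (1/(1+lam)) with hq0def
  have hq0pos : 0 < q0 := lt_min (by linarith) (by positivity)
  have hq0lt : q0 < a := lt_of_le_of_lt (min_le_left _ _) (by linarith)
  have hq0le : q0 ≤ 1/(1+lam) := min_le_right _ _
  have hq0lt1 : q0 < 1 := lt_of_le_of_lt hq0le (by
    rw [div_lt_one (by linarith)]; linarith)
  have hpsiq0 : 0 < psi n lam q0 := by
    have h1 : 0 < Real.log (1 + lam*q0^n) :=
      Real.log_pos (by nlinarith [pow_pos hq0pos n])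
    have h2' : Real.log lam + Real.log q0 = Real.log (lam*q0) :=
      (Real.log_mul (ne_of_gt hlam) (ne_of_gt hq0pos)).symm
    have h3 : lam * q0 ≤ 1 - q0 := by
      rw [le_div_iff₀ (by linarith : (0:ℝ) < 1 + lam)] at hq0le
      nlinarith
    have h4 : Real.log (lam*q0) ≤ Real.log (1-q0) :=
      Real.log_le_log (mul_pos hlam hq0pos) h3
    have h5 : 0 < (n:ℝ) * Real.log (1 + lam*q0^n) :=
      mul_pos (by linarith) h1
    simp only [psi]
    linarith
  -- point q1 with psi < 0 above b
  set eps := lam / (4*(1+lam)^n) with hepsdef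
  have hepspos : 0 < eps := by positivity
  set q1 := max b (max (1/2) (1-eps)) with hq1def
  have hq1b : b ≤ q1 := le_max_left _ _
  have hq1half : (1/2:ℝ) ≤ q1 := le_trans (le_max_left _ _) (le_max_right _ _)
  have hq1eps : 1 - eps ≤ q1 := le_trans (le_max_right _ _) (le_max_right _ _)
  have hq1lt1 : q1 < 1 := by
    rw [hq1def]
    apply max_lt hb1 (max_lt (by norm_num) (by linarith))
  have hq10 : 0 < q1 := lt_of_lt_of_le (by norm_num) hq1half
  have h1q1 : 0 < 1 - q1 := by linarith
  have hpsiq1 : psi n lam q1 < 0 := by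
    have hlam1 : (0:ℝ) < 1 + lam := by linarith
    have key1 : Real.log (1 + lam*q1^n) ≤ Real.log (1+lam) := by
      apply Real.log_le_log (hA_pos hlam hq10)
      nlinarith [pow_le_one₀ hq10.le hq1lt1.le (n := n), pow_pos hq10 n]
    have key2 : Real.log (1/2:ℝ) ≤ Real.log q1 :=
      Real.log_le_log (by norm_num) hq1half
    have e2 : Real.log (1/2:ℝ) = -Real.log 2 := by
      rw [one_div, Real.log_inv]
    have key3 : Real.log (1-q1) < Real.log (lam/(2*(1+lam)^n)) := by
      apply Real.log_lt_log h1q1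
      have hps : (0:ℝ) < (1+lam)^n := pow_pos hlam1 n
      have : 1 - q1 ≤ eps := by linarith
      have heps2 : eps < lam/(2*(1+lam)^n) := by
        rw [hepsdef, div_lt_div_iff₀ (by positivity) (by positivity)]
        nlinarith
      linarith
    have e1 : Real.log (lam/(2*(1+lam)^n))
        = Real.log lam - (Real.log 2 + n*Real.log (1+lam)) := by
      rw [Real.log_div (ne_of_gt hlam) (by positivity),
        Real.log_mul (by norm_num) (by positivity), Real.log_pow]
    have nkey1 : (n:ℝ) * Real.log (1 + lam*q1^n) ≤ (n:ℝ) * Real.log (1+lam) :=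
      mul_le_mul_of_nonneg_left key1 (by linarith)
    simp only [psi]
    rw [e1] at key3
    rw [e2] at key2
    linarith
  -- existence of qm and qp
  obtain ⟨qm, hqmI, hqmz⟩ : ∃ x ∈ Ioo q0 a, psi n lam x = 0 := by
    have hsub : Icc q0 a ⊆ Ioo (0:ℝ) 1 := fun x hx => ⟨lt_of_lt_of_le hq0pos hx.1,
      lt_of_le_of_lt hx.2 ha1⟩
    have h := intermediate_value_Ioo' (a := q0) (b := a) hq0lt.le
      ((cont_psi (n := n) hlam).mono hsub)
    obtain ⟨x, hx1, hx2⟩ := h ⟨hpsia, hpsiq0⟩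
    exact ⟨x, hx1, hx2⟩
  obtain ⟨qp, hqpI, hqpz⟩ : ∃ x ∈ Ioo b q1, psi n lam x = 0 := by
    have hsub : Icc b q1 ⊆ Ioo (0:ℝ) 1 := fun x hx => ⟨lt_of_lt_of_le hb0 hx.1,
      lt_of_le_of_lt hx.2 hq1lt1⟩
    have h := intermediate_value_Ioo' (a := b) (b := q1) hq1b
      ((cont_psi (n := n) hlam).mono hsub)
    obtain ⟨x, hx1, hx2⟩ := h ⟨hpsiq1, hpsib⟩
    exact ⟨x, hx1, hx2⟩
  have hqmm : qm ∈ Ioo (0:ℝ) 1 := ⟨hq0pos.trans hqmI.1, hqmI.2.trans ha1⟩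
  have hqpm : qp ∈ Ioo (0:ℝ) 1 := ⟨hb0.trans hqpI.1, hqpI.2.trans hq1lt1⟩
  have hqmp : qm < p := hqmI.2.trans_le hpa.le
  have hpqp : p < qp := hpb.trans_le hqpI.1.le
  -- classification of zeros
  have hclass : ∀ q ∈ Ioo (0:ℝ) 1,
      (1 / (1 + lam * (1 / (1 + lam * q ^ n)) ^ n) = q) → q = qm ∨ q = p ∨ q = qp := by
    intro q hq hGq
    have hqz : psi n lam q = 0 := (psi_eq_zero_iff hlam hq).mpr ((G_eq_iff hlam hq).mp hGq)
    rcases le_or_gt q a with h | h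
    · left
      exact hanti1.injOn ⟨hq.1, h⟩ ⟨hqmm.1, hqmI.2.le⟩ (by rw [hqz, hqmz])
    rcases le_or_gt q b with h' | h'
    · right; left
      exact hmono.injOn ⟨h.le, h'⟩ ⟨hpa.le, hpb.le⟩ (by rw [hqz, hpsi0])
    · right; right
      exact hanti2.injOn ⟨h'.le, hq.2⟩ ⟨hqpI.1.le, hqpm.2⟩ (by rw [hqz, hqpz])
  -- G-fixed-point equations for qm, qp
  have hGqm : 1 / (1 + lam * (1 / (1 + lam * qm ^ n)) ^ n) = qm :=
    (G_eq_iff hlam hqmm).mpr ((psi_eq_zero_iff hlam hqmm).mp hqmz)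
  have hGqp : 1 / (1 + lam * (1 / (1 + lam * qp ^ n)) ^ n) = qp :=
    (G_eq_iff hlam hqpm).mpr ((psi_eq_zero_iff hlam hqpm).mp hqpz)
  -- F swaps qm and qp
  have hFqm_mem : 1 / (1 + lam * qm ^ n) ∈ Ioo (0:ℝ) 1 := F_mem hlam hqmm
  have hGFqm : 1 / (1 + lam * (1 / (1 + lam * (1 / (1 + lam * qm ^ n)) ^ n)) ^ n)
      = 1 / (1 + lam * qm ^ n) := by
    rw [hGqm]
  have hswap1 : 1 / (1 + lam * qm ^ n) = qp := by
    rcases hclass _ hFqm_mem hGFqm with h | h | h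
    · exfalso
      have : qm = p := huF qm hqmm h
      linarith
    · exfalso
      have : qm = p := by
        rw [← hGqm, h, hpf]
      linarith
    · exact h
  have hswap2 : 1 / (1 + lam * qp ^ n) = qm := by
    rw [← hswap1]
    exact hGqm
  exact ⟨qm, qp, hqmm, hqpm, hqmp, hpqp, hGqm, hGqp, hswap2, hswap1, hclass⟩

end HCaux

theorem stmt3 (d : ℕ) (hd : 3 ≤ d) (qs : ℝ → ℝ)
    (hqs : ∀ lam : ℝ, 0 < lam →
      qs lam ∈ Ioo (0:ℝ) 1 ∧ hcF d lam (qs lam) = qs lam)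
    (huniq : ∀ lam : ℝ, 0 < lam →
      ∀ q ∈ Ioo (0:ℝ) 1, hcF d lam q = q → q = qs lam) :
    (∀ lam : ℝ, 0 < lam → lam ≤ hcLamc d →
      ∀ q ∈ Ioo (0:ℝ) 1, hcF d lam (hcF d lam q) = q → q = qs lam) ∧
    (∀ lam : ℝ, hcLamc d < lam →
      ∃ qm qp : ℝ, qm ∈ Ioo (0:ℝ) 1 ∧ qp ∈ Ioo (0:ℝ) 1 ∧
        qm < qs lam ∧ qs lam < qp ∧
        hcF d lam (hcF d lam qm) = qm ∧ hcF d lam (hcF d lam qp) = qp ∧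
        hcF d lam qp = qm ∧ hcF d lam qm = qp ∧
        (∀ q ∈ Ioo (0:ℝ) 1, hcF d lam (hcF d lam q) = q →
          q = qm ∨ q = qs lam ∨ q = qp)) := by
  have hn : 2 ≤ d - 1 := by omega
  have hc : hcLamc d = HCaux.lamc (d-1) := by
    unfold hcLamc HCaux.lamc
    have e2 : d = (d - 1) + 1 := by omega
    rw [e2]
    simp only [Nat.add_sub_cancel]
    push_cast
    ring_nf
  constructor
  · intro lam hlam hle q hq hGq
    obtain ⟨hpm, hpf⟩ := hqs lam hlam
    have hpf' : 1 / (1 + lam * (qs lam) ^ (d-1)) = qs lam := by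
      simpa only [hcF] using hpf
    apply HCaux.partA hn hlam (by rw [← hc]; exact hle) hpm hpf' hq
    simpa only [hcF] using hGq
  · intro lam hgt
    have hlam : 0 < lam := lt_trans (by rw [hc]; exact HCaux.lamc_pos hn) hgt
    obtain ⟨hpm, hpf⟩ := hqs lam hlam
    have hpf' : 1 / (1 + lam * (qs lam) ^ (d-1)) = qs lam := by
      simpa only [hcF] using hpf
    have huF : ∀ q ∈ Ioo (0:ℝ) 1, 1 / (1 + lam * q ^ (d-1)) = q → q = qs lam := by
      intro q hq h
      exact huniq lam hlam q hq (by simpa only [hcF] using h)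
    obtain ⟨qm, qp, h1, h2, h3, h4, h5, h6, h7, h8, h9⟩ :=
      HCaux.partB hn hlam (by rw [← hc]; exact hgt) hpm hpf' huF
    refine ⟨qm, qp, h1, h2, h3, h4, ?_, ?_, ?_, ?_, ?_⟩
    · simp only [hcF]; exact h5
    · simp only [hcF]; exact h6
    · simp only [hcF]; exact h7
    · simp only [hcF]; exact h8
    · intro q hq hGq
      exact h9 q hq (by simpa only [hcF] using hGq)
end

section
/- Fix an integer d ≥ 3. For λ > λ_c(d), let q^-(λ) < q^+(λ) denote the smallest and largest fixed points of G_λ = F_λ ∘ F_λ in (0,1). Then q^-(λ) and q^+(λ) are continuous functions of λ on (λ_c(d), ∞), and q^+(λ) → q_*(λ_c(d)) and q^-(λ) → q_*(λ_c(d)) as λ decreases to λ_c(d), where q_*(λ_c(d)) is the unique fixed point of F_{λ_c(d)}. -/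
open Set Filter

namespace HCAux

variable (d : ℕ)

noncomputable def t0 : ℝ := ((d:ℝ) - 2) / ((d:ℝ) - 1)

noncomputable def psi (t : ℝ) : ℝ := t ^ (d - 2) - t ^ (d - 1)

noncomputable def dpsi (t : ℝ) : ℝ := t ^ (d - 3) * (((d:ℝ) - 2) - ((d:ℝ) - 1) * t)

variable {d}

lemma dg2 (hd : 3 ≤ d) : (2:ℝ) < (d:ℝ) := by exact_mod_cast Nat.lt_of_lt_of_le (by norm_num) hd

lemma t0_mem (hd : 3 ≤ d) : t0 d ∈ Ioo (0:ℝ) 1 := by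
  have h2 := dg2 hd
  constructor
  · exact div_pos (by linarith) (by linarith)
  · rw [t0, div_lt_one (by linarith)]; linarith

lemma psi_eq (hd : 3 ≤ d) (t : ℝ) : psi d t = (1 - t) * t ^ (d - 2) := by
  have h : d - 1 = (d - 2) + 1 := by omega
  rw [psi, h, pow_succ]; ring

lemma psi_hasDeriv (hd : 3 ≤ d) (t : ℝ) : HasDerivAt (psi d) (dpsi d t) t := by
  have h1 : HasDerivAt (fun t : ℝ => t ^ (d - 2)) ((d - 2 : ℕ) * t ^ (d - 2 - 1)) t :=
    hasDerivAt_pow (d - 2) t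
  have h2 : HasDerivAt (fun t : ℝ => t ^ (d - 1)) ((d - 1 : ℕ) * t ^ (d - 1 - 1)) t :=
    hasDerivAt_pow (d - 1) t
  have := h1.sub h2
  refine this.congr_deriv ?_
  have e1 : d - 2 - 1 = d - 3 := by omega
  have e2 : d - 1 - 1 = d - 2 := by omega
  have e3 : d - 2 = (d - 3) + 1 := by omega
  have c1 : ((d - 2 : ℕ) : ℝ) = (d : ℝ) - 2 := by
    have : (2:ℕ) ≤ d := by omega
    push_cast [Nat.cast_sub this]; ring
  have c2 : ((d - 1 : ℕ) : ℝ) = (d : ℝ) - 1 := by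
    have : (1:ℕ) ≤ d := by omega
    push_cast [Nat.cast_sub this]; ring
  rw [dpsi, e1, e2, c1, c2, e3, pow_succ]; ring

lemma dpsi_pos (hd : 3 ≤ d) {t : ℝ} (ht : t ∈ Ioo 0 (t0 d)) : 0 < dpsi d t := by
  have h2 := dg2 hd
  have ht2 : t < t0 d := ht.2
  rw [t0, lt_div_iff₀ (by linarith)] at ht2
  exact mul_pos (pow_pos ht.1 _) (by nlinarith)

lemma dpsi_neg (hd : 3 ≤ d) {t : ℝ} (ht : t ∈ Ioo (t0 d) 1) : dpsi d t < 0 := by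
  have h2 := dg2 hd
  have ht1 : t0 d < t := ht.1
  have ht0 : 0 < t := lt_trans (t0_mem hd).1 ht1
  rw [t0, div_lt_iff₀ (by linarith)] at ht1
  have : ((d:ℝ) - 2) - ((d:ℝ) - 1) * t < 0 := by nlinarith
  exact mul_neg_of_pos_of_neg (pow_pos ht0 _) this

lemma psi_contOn : ContinuousOn (psi d) Set.univ := by
  apply Continuous.continuousOn
  exact (continuous_pow _).sub (continuous_pow _)

lemma psi_strictMonoOn (hd : 3 ≤ d) : StrictMonoOn (psi d) (Icc 0 (t0 d)) := by
  apply strictMonoOn_of_deriv_pos (convex_Icc _ _) (psi_contOn.mono (subset_univ _))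
  intro t ht
  rw [interior_Icc] at ht
  rw [(psi_hasDeriv hd t).deriv]
  exact dpsi_pos hd ht

lemma psi_strictAntiOn (hd : 3 ≤ d) : StrictAntiOn (psi d) (Icc (t0 d) 1) := by
  apply strictAntiOn_of_deriv_neg (convex_Icc _ _) (psi_contOn.mono (subset_univ _))
  intro t ht
  rw [interior_Icc] at ht
  rw [(psi_hasDeriv hd t).deriv]
  exact dpsi_neg hd ht

lemma psi_pos (hd : 3 ≤ d) {t : ℝ} (ht : t ∈ Ioo (0:ℝ) 1) : 0 < psi d t := by
  rw [psi_eq hd]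
  exact mul_pos (by linarith [ht.2]) (pow_pos ht.1 _)

lemma psi_one (hd : 3 ≤ d) : psi d 1 = 0 := by simp [psi]

lemma psi_lt_t0_left (hd : 3 ≤ d) {x : ℝ} (hx : x ∈ Ioo 0 (t0 d)) : psi d x < psi d (t0 d) :=
  psi_strictMonoOn hd (by constructor <;> [exact le_of_lt hx.1; exact le_of_lt hx.2])
    (by constructor <;> [exact le_of_lt (t0_mem hd).1; exact le_rfl]) hx.2

lemma psi_lt_t0_right (hd : 3 ≤ d) {y : ℝ} (hy : y ∈ Ioo (t0 d) 1) : psi d y < psi d (t0 d) :=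
  psi_strictAntiOn hd (by constructor <;> [exact le_rfl; exact le_of_lt (t0_mem hd).2])
    (by constructor <;> [exact le_of_lt hy.1; exact le_of_lt hy.2]) hy.1


open Classical in
/-- inverse of `psi` on `(t0, 1)`. -/
noncomputable def pinv (d : ℕ) (v : ℝ) : ℝ :=
  if h : ∃ y, y ∈ Ioo (t0 d) 1 ∧ psi d y = v then h.choose else 1

lemma pinv_exists (hd : 3 ≤ d) {v : ℝ} (hv : v ∈ Ioo 0 (psi d (t0 d))) :
    ∃ y, y ∈ Ioo (t0 d) 1 ∧ psi d y = v := by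
  have hsub : Ioo (psi d 1) (psi d (t0 d)) ⊆ psi d '' Ioo (t0 d) 1 :=
    intermediate_value_Ioo' (le_of_lt (t0_mem hd).2) (psi_contOn.mono (subset_univ _))
  have : v ∈ Ioo (psi d 1) (psi d (t0 d)) := by rw [psi_one hd]; exact hv
  obtain ⟨y, hy, hyv⟩ := hsub this
  exact ⟨y, hy, hyv⟩

lemma pinv_spec (hd : 3 ≤ d) {v : ℝ} (hv : v ∈ Ioo 0 (psi d (t0 d))) :
    pinv d v ∈ Ioo (t0 d) 1 ∧ psi d (pinv d v) = v := by
  have h := pinv_exists hd hv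
  rw [pinv]
  rw [dif_pos h]
  exact h.choose_spec

lemma pinv_unique (hd : 3 ≤ d) {v y : ℝ} (hv : v ∈ Ioo 0 (psi d (t0 d)))
    (hy : y ∈ Ioo (t0 d) 1) (hyv : psi d y = v) : y = pinv d v := by
  obtain ⟨hp, hpv⟩ := pinv_spec hd hv
  have hinj := (psi_strictAntiOn hd).injOn
  exact hinj (⟨le_of_lt hy.1, le_of_lt hy.2⟩) (⟨le_of_lt hp.1, le_of_lt hp.2⟩) (by rw [hyv, hpv])

lemma psi_mem_Ioo (hd : 3 ≤ d) {x : ℝ} (hx : x ∈ Ioo 0 (t0 d)) :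
    psi d x ∈ Ioo 0 (psi d (t0 d)) :=
  ⟨psi_pos hd ⟨hx.1, lt_trans hx.2 (t0_mem hd).2⟩, psi_lt_t0_left hd hx⟩

lemma pinv_strictAntiOn (hd : 3 ≤ d) : StrictAntiOn (pinv d) (Ioo 0 (psi d (t0 d))) := by
  intro v1 hv1 v2 hv2 h12
  obtain ⟨hp1, hp1v⟩ := pinv_spec hd hv1
  obtain ⟨hp2, hp2v⟩ := pinv_spec hd hv2
  by_contra hle
  push_neg at hle
  have h2 : psi d (pinv d v2) ≤ psi d (pinv d v1) :=
    ((psi_strictAntiOn hd).le_iff_ge ⟨le_of_lt hp2.1, le_of_lt hp2.2⟩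
      ⟨le_of_lt hp1.1, le_of_lt hp1.2⟩).mpr hle
  rw [hp1v, hp2v] at h2
  linarith

lemma pinv_image (hd : 3 ≤ d) : pinv d '' (Ioo 0 (psi d (t0 d))) = Ioo (t0 d) 1 := by
  apply Subset.antisymm
  · rintro _ ⟨v, hv, rfl⟩
    exact (pinv_spec hd hv).1
  · rintro y hy
    have hv : psi d y ∈ Ioo 0 (psi d (t0 d)) :=
      ⟨psi_pos hd ⟨lt_trans (t0_mem hd).1 hy.1, hy.2⟩, psi_lt_t0_right hd hy⟩
    exact ⟨psi d y, hv, (pinv_unique hd hv hy rfl).symm⟩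

lemma continuousAt_of_strictAntiOn {f : ℝ → ℝ} {s : Set ℝ} {a : ℝ}
    (h : StrictAntiOn f s) (hs : s ∈ nhds a) (hfs : f '' s ∈ nhds (f a)) :
    ContinuousAt f a := by
  have hg : StrictMonoOn (fun t => -f t) s := fun x hx y hy hxy => neg_lt_neg (h hx hy hxy)
  have himg : (fun t => -f t) '' s ∈ nhds (-f a) := by
    have h1 : (fun t => -f t) '' s = Neg.neg ⁻¹' (f '' s) := by
      rw [show (fun t : ℝ => -f t) = Neg.neg ∘ f from rfl, image_comp]
      ext z; simp [neg_eq_iff_eq_neg]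
    rw [h1]
    exact (Homeomorph.neg ℝ).continuous.continuousAt.preimage_mem_nhds (by simpa using hfs)
  have hc : ContinuousAt (fun t => -f t) a := hg.continuousAt_of_image_mem_nhds hs himg
  have := hc.neg
  convert this using 1; funext t; simp

lemma pinv_continuousAt (hd : 3 ≤ d) {v : ℝ} (hv : v ∈ Ioo 0 (psi d (t0 d))) :
    ContinuousAt (pinv d) v := by
  apply continuousAt_of_strictAntiOn (pinv_strictAntiOn hd)
    (Ioo_mem_nhds hv.1 hv.2)
  rw [pinv_image hd]
  exact Ioo_mem_nhds (pinv_spec hd hv).1.1 (pinv_spec hd hv).1.2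

lemma pinv_hasDeriv (hd : 3 ≤ d) {v : ℝ} (hv : v ∈ Ioo 0 (psi d (t0 d))) :
    HasDerivAt (pinv d) (dpsi d (pinv d v))⁻¹ v := by
  apply HasDerivAt.of_local_left_inverse (pinv_continuousAt hd hv)
    (psi_hasDeriv hd (pinv d v))
    (ne_of_lt (dpsi_neg hd (pinv_spec hd hv).1))
  filter_upwards [Ioo_mem_nhds hv.1 hv.2] with w hw
  exact (pinv_spec hd hw).2

noncomputable def yh (d : ℕ) (x : ℝ) : ℝ := pinv d (psi d x)

lemma yh_mem (hd : 3 ≤ d) {x : ℝ} (hx : x ∈ Ioo 0 (t0 d)) : yh d x ∈ Ioo (t0 d) 1 :=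
  (pinv_spec hd (psi_mem_Ioo hd hx)).1

lemma yh_psi (hd : 3 ≤ d) {x : ℝ} (hx : x ∈ Ioo 0 (t0 d)) : psi d (yh d x) = psi d x :=
  (pinv_spec hd (psi_mem_Ioo hd hx)).2

lemma yh_hasDeriv (hd : 3 ≤ d) {x : ℝ} (hx : x ∈ Ioo 0 (t0 d)) :
    HasDerivAt (yh d) ((dpsi d (yh d x))⁻¹ * dpsi d x) x := by
  have h1 := pinv_hasDeriv hd (psi_mem_Ioo hd hx)
  exact h1.comp x (psi_hasDeriv hd x)

noncomputable def gfun (d : ℕ) (a : ℝ) : ℝ :=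
  ((d:ℝ) - 2) * Real.log (((d:ℝ) - 2) + ((d:ℝ) - 1) * a)
    - (d:ℝ) * Real.log (1 + a) - ((d:ℝ) - 2) * Real.log (((d:ℝ) - 2) - a)

lemma gfun_hasDeriv (hd : 3 ≤ d) {a : ℝ} (ha : a ∈ Ioo 0 ((d:ℝ) - 2)) :
    HasDerivAt (gfun d)
      (((d:ℝ) - 2) * ((((d:ℝ) - 2) + ((d:ℝ) - 1) * a)⁻¹ * ((d:ℝ) - 1))
        - (d:ℝ) * ((1 + a)⁻¹ * 1) - ((d:ℝ) - 2) * ((((d:ℝ) - 2) - a)⁻¹ * (-1))) a := by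
  have h2 := dg2 hd
  have hA : ((d:ℝ) - 2) + ((d:ℝ) - 1) * a ≠ 0 := by nlinarith [ha.1]
  have hB : (1 : ℝ) + a ≠ 0 := by nlinarith [ha.1]
  have hC : ((d:ℝ) - 2) - a ≠ 0 := by nlinarith [ha.2]
  have l1 : HasDerivAt (fun a : ℝ => ((d:ℝ) - 2) + ((d:ℝ) - 1) * a) ((d:ℝ) - 1) a := by
    simpa using ((hasDerivAt_id a).const_mul ((d:ℝ) - 1)).const_add ((d:ℝ) - 2)
  have l2 : HasDerivAt (fun a : ℝ => (1:ℝ) + a) 1 a := by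
    simpa using (hasDerivAt_id a).const_add (1:ℝ)
  have l3 : HasDerivAt (fun a : ℝ => ((d:ℝ) - 2) - a) (-1) a := by
    exact (hasDerivAt_id' (x := a)).const_sub ((d:ℝ) - 2)
  have m1 := ((Real.hasDerivAt_log hA).comp a l1).const_mul ((d:ℝ) - 2)
  have m2 := ((Real.hasDerivAt_log hB).comp a l2).const_mul ((d:ℝ))
  have m3 := ((Real.hasDerivAt_log hC).comp a l3).const_mul ((d:ℝ) - 2)
  exact (m1.sub m2).sub m3

lemma gfun_deriv_eq (hd : 3 ≤ d) {a : ℝ} (ha : a ∈ Ioo 0 ((d:ℝ) - 2)) :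
    deriv (gfun d) a = (d:ℝ) * ((d:ℝ) - 1) * a ^ 2 /
      (((((d:ℝ) - 2) + ((d:ℝ) - 1) * a) * (1 + a)) * (((d:ℝ) - 2) - a)) := by
  have h2 := dg2 hd
  rw [(gfun_hasDeriv hd ha).deriv]
  have hA : ((d:ℝ) - 2) + ((d:ℝ) - 1) * a ≠ 0 := by nlinarith [ha.1]
  have hB : (1 : ℝ) + a ≠ 0 := by nlinarith [ha.1]
  have hC : ((d:ℝ) - 2) - a ≠ 0 := by nlinarith [ha.2]
  field_simp
  ring

lemma gfun_continuousOn (hd : 3 ≤ d) : ContinuousOn (gfun d) (Ico 0 ((d:ℝ) - 2)) := by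
  have h2 := dg2 hd
  apply ContinuousOn.sub
  apply ContinuousOn.sub
  · apply ContinuousOn.mul continuousOn_const
    intro a ha
    have hA : ((d:ℝ) - 2) + ((d:ℝ) - 1) * a ≠ 0 := by nlinarith [ha.1]
    have hin : ContinuousAt (fun x : ℝ => ((d:ℝ) - 2) + ((d:ℝ) - 1) * x) a := by fun_prop
    have := hin.log hA
    exact this.continuousWithinAt
  · apply ContinuousOn.mul continuousOn_const
    intro a ha
    have hB : (1 : ℝ) + a ≠ 0 := by nlinarith [ha.1]
    have hin : ContinuousAt (fun x : ℝ => (1:ℝ) + x) a := by fun_prop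
    have := hin.log hB
    exact this.continuousWithinAt
  · apply ContinuousOn.mul continuousOn_const
    intro a ha
    have hC : ((d:ℝ) - 2) - a ≠ 0 := by nlinarith [ha.2]
    have hin : ContinuousAt (fun x : ℝ => ((d:ℝ) - 2) - x) a := by fun_prop
    have := hin.log hC
    exact this.continuousWithinAt

lemma gfun_pos (hd : 3 ≤ d) {a : ℝ} (ha : a ∈ Ioo 0 ((d:ℝ) - 2)) : 0 < gfun d a := by
  have h2 := dg2 hd
  have hmono : StrictMonoOn (gfun d) (Ico 0 ((d:ℝ) - 2)) := by
    apply strictMonoOn_of_deriv_pos (convex_Ico _ _) (gfun_continuousOn hd)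
    intro a ha
    rw [interior_Ico] at ha
    rw [gfun_deriv_eq hd ha]
    have hA : 0 < ((d:ℝ) - 2) + ((d:ℝ) - 1) * a := by nlinarith [ha.1]
    have hB : (0:ℝ) < 1 + a := by nlinarith [ha.1]
    have hC : (0:ℝ) < ((d:ℝ) - 2) - a := by nlinarith [ha.2]
    apply div_pos
    · exact mul_pos (mul_pos (by linarith : (0:ℝ) < (d:ℝ)) (by linarith : (0:ℝ) < (d:ℝ) - 1))
        (pow_pos ha.1 2)
    · positivity
  have h0 : gfun d 0 = 0 := by
    simp [gfun]
  have := hmono (left_mem_Ico.mpr (by linarith)) ⟨le_of_lt ha.1, ha.2⟩ ha.1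
  rwa [h0] at this

/-- The central polynomial inequality. -/
lemma P_ineq (hd : 3 ≤ d) {a : ℝ} (ha : a ∈ Ioo 0 ((d:ℝ) - 2)) :
    (1 + a) ^ d * (((d:ℝ) - 2) - a) ^ (d - 2)
      < (((d:ℝ) - 2) + ((d:ℝ) - 1) * a) ^ (d - 2) := by
  have h2 := dg2 hd
  have hA : 0 < ((d:ℝ) - 2) + ((d:ℝ) - 1) * a := by nlinarith [ha.1]
  have hB : (0:ℝ) < 1 + a := by nlinarith [ha.1]
  have hC : (0:ℝ) < ((d:ℝ) - 2) - a := by nlinarith [ha.2]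
  have hg := gfun_pos hd ha
  have c1 : ((d - 2 : ℕ) : ℝ) = (d:ℝ) - 2 := by
    have : (2:ℕ) ≤ d := by omega
    push_cast [Nat.cast_sub this]; ring
  have hlog : Real.log ((1 + a) ^ d * (((d:ℝ) - 2) - a) ^ (d - 2))
      < Real.log ((((d:ℝ) - 2) + ((d:ℝ) - 1) * a) ^ (d - 2)) := by
    rw [Real.log_mul (by positivity) (by positivity), Real.log_pow, Real.log_pow, Real.log_pow]
    rw [gfun] at hg
    rw [c1]
    linarith
  have hpos : (0:ℝ) < (1 + a) ^ d * (((d:ℝ) - 2) - a) ^ (d - 2) := by positivity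
  have hpos2 : (0:ℝ) < (((d:ℝ) - 2) + ((d:ℝ) - 1) * a) ^ (d - 2) := by positivity
  exact (Real.log_lt_log_iff hpos hpos2).mp hlog

lemma yh_one_lt_pos (hd : 3 ≤ d) {x : ℝ} (hx : x ∈ Ioo 0 (t0 d)) : 0 < yh d x :=
  lt_trans (t0_mem hd).1 (yh_mem hd hx).1

lemma aux_id1 (n : ℕ) (C E B : ℝ) (hB : B ≠ 0) (hE : E ≠ 0) :
    (B / E) * ((C / E) ^ n) = B ^ (n + 2) * C ^ n / (E ^ (n + 1) * B ^ (n + 1)) := by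
  rw [div_pow]
  field_simp
  ring

lemma aux_id2 (n : ℕ) (W E B : ℝ) (hB : B ≠ 0) (hE : E ≠ 0) :
    (1 / (E * B)) * ((W / (E * B)) ^ n) = W ^ n / (E ^ (n + 1) * B ^ (n + 1)) := by
  rw [div_pow, one_div, inv_mul_eq_div, div_div, ← pow_succ, mul_pow]

set_option maxHeartbeats 1000000 in
lemma key_ineq (hd : 3 ≤ d) {x : ℝ} (hx : x ∈ Ioo 0 (t0 d)) :
    ((d:ℝ) - 1) * x * (1 - x) * dpsi d x < yh d x * (-(dpsi d (yh d x))) := by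
  have h2 := dg2 hd
  obtain ⟨y, hy_def⟩ : ∃ y : ℝ, y = yh d x := ⟨_, rfl⟩
  rw [← hy_def]
  have hy : y ∈ Ioo (t0 d) 1 := hy_def ▸ yh_mem hd hx
  have hy0 : 0 < y := lt_trans (t0_mem hd).1 hy.1
  have hx0 : 0 < x := hx.1
  have hx1 : x < 1 := lt_trans hx.2 (t0_mem hd).2
  have hxt : x < t0 d := hx.2
  have hconstr : (1 - y) * y ^ (d - 2) = (1 - x) * x ^ (d - 2) := by
    have := yh_psi hd hx
    rw [← hy_def] at this
    rwa [psi_eq hd, psi_eq hd] at this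
  obtain ⟨a, ha_def⟩ : ∃ a : ℝ, a = ((d:ℝ) - 2) - ((d:ℝ) - 1) * x := ⟨_, rfl⟩
  obtain ⟨b, hb_def⟩ : ∃ b : ℝ, b = ((d:ℝ) - 1) * y - ((d:ℝ) - 2) := ⟨_, rfl⟩
  have hdpos : (0:ℝ) < (d:ℝ) - 1 := by linarith
  have ha_pos : 0 < a := by
    rw [t0, lt_div_iff₀ hdpos] at hxt
    rw [ha_def]; nlinarith
  have ha_lt : a < (d:ℝ) - 2 := by rw [ha_def]; nlinarith
  have hb_pos : 0 < b := by
    have h1 := hy.1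
    rw [t0, div_lt_iff₀ hdpos] at h1
    rw [hb_def]; nlinarith
  have hb_lt : b < 1 := by rw [hb_def]; nlinarith [hy.2]
  have hBpos : (0:ℝ) < 1 + a := by linarith
  have hBne : (1 + a : ℝ) ≠ 0 := ne_of_gt hBpos
  have hdne : ((d:ℝ) - 1) ≠ 0 := ne_of_gt hdpos
  -- step 1 : a < b * (1 + a)
  have hstep1 : a < b * (1 + a) := by
    obtain ⟨y0, hy0_def⟩ : ∃ y0 : ℝ, y0 = (((d:ℝ) - 2) + a / (1 + a)) / ((d:ℝ) - 1) := ⟨_, rfl⟩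
    have hfrac : 0 < a / (1 + a) := div_pos ha_pos hBpos
    have hfrac1 : a / (1 + a) < 1 := by rw [div_lt_one hBpos]; linarith
    have hy0_mem : y0 ∈ Ioo (t0 d) 1 := by
      constructor
      · rw [t0, hy0_def, div_lt_div_iff₀ hdpos hdpos]; nlinarith
      · rw [hy0_def, div_lt_one hdpos]; linarith
    have hx_eq : x = (((d:ℝ) - 2) - a) / ((d:ℝ) - 1) := by
      rw [ha_def]; field_simp; ring
    have hx1_eq : 1 - x = (1 + a) / ((d:ℝ) - 1) := by
      rw [ha_def]; field_simp; ring
    have hy0_1 : 1 - y0 = 1 / (((d:ℝ) - 1) * (1 + a)) := by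
      rw [hy0_def]; field_simp; ring
    have hy0_2 : y0 = (((d:ℝ) - 2) + ((d:ℝ) - 1) * a) / (((d:ℝ) - 1) * (1 + a)) := by
      rw [hy0_def]; field_simp; ring
    have hp_d : (1 + a) ^ d = (1 + a) ^ ((d - 2) + 2) := by congr 1; omega
    have hp_K : ((d:ℝ) - 1) ^ (d - 1) = ((d:ℝ) - 1) ^ ((d - 2) + 1) := by congr 1; omega
    have hp_B : (1 + a) ^ (d - 1) = (1 + a) ^ ((d - 2) + 1) := by congr 1; omega
    have hpsix : psi d x = ((1 + a) ^ d * (((d:ℝ) - 2) - a) ^ (d - 2)) /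
        (((d:ℝ) - 1) ^ (d - 1) * (1 + a) ^ (d - 1)) := by
      rw [psi_eq hd, hx1_eq, hx_eq, hp_d, hp_K, hp_B]
      exact aux_id1 (d - 2) _ _ _ hBne hdne
    have hpsiy0 : psi d y0 = ((((d:ℝ) - 2) + ((d:ℝ) - 1) * a) ^ (d - 2)) /
        (((d:ℝ) - 1) ^ (d - 1) * (1 + a) ^ (d - 1)) := by
      rw [psi_eq hd, hy0_1, hy0_2, hp_K, hp_B]
      exact aux_id2 (d - 2) _ _ _ hBne hdne
    have hlt : psi d x < psi d y0 := by
      rw [hpsix, hpsiy0, div_lt_div_iff₀ (by positivity) (by positivity)]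
      exact mul_lt_mul_of_pos_right (P_ineq hd ⟨ha_pos, ha_lt⟩) (by positivity)
    have hy0y : y0 < y := by
      by_contra hcon
      push_neg at hcon
      have hmem1 : y ∈ Icc (t0 d) 1 := ⟨le_of_lt hy.1, le_of_lt hy.2⟩
      have hmem2 : y0 ∈ Icc (t0 d) 1 := ⟨le_of_lt hy0_mem.1, le_of_lt hy0_mem.2⟩
      have hle := ((psi_strictAntiOn hd).le_iff_ge hmem2 hmem1).mpr hcon
      have hpsiyx : psi d y = psi d x := by rw [hy_def]; exact yh_psi hd hx
      rw [hpsiyx] at hle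
      linarith
    have hy0_eval : ((d:ℝ) - 1) * y0 - ((d:ℝ) - 2) = a / (1 + a) := by
      rw [hy0_def]; field_simp; ring
    have hbgt : a / (1 + a) < b := by
      rw [hb_def, ← hy0_eval]
      nlinarith
    rw [div_lt_iff₀ hBpos] at hbgt
    linarith
  -- step 2 : conclude
  have hdpx : dpsi d x = x ^ (d - 3) * a := by rw [dpsi, ha_def]
  have hdpy : -(dpsi d y) = y ^ (d - 3) * b := by rw [dpsi, hb_def]; ring
  have hxe : x * x ^ (d - 3) = x ^ (d - 2) := by
    rw [← pow_succ']; congr 1; omega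
  have hye : y * y ^ (d - 3) = y ^ (d - 2) := by
    rw [← pow_succ']; congr 1; omega
  have hlhs : ((d:ℝ) - 1) * x * (1 - x) * dpsi d x = (1 - b) * a * y ^ (d - 2) := by
    rw [hdpx]
    calc ((d:ℝ) - 1) * x * (1 - x) * (x ^ (d - 3) * a)
        = (((d:ℝ) - 1) * (1 - x)) * (x * x ^ (d - 3)) * a := by ring
      _ = (((d:ℝ) - 1) * (1 - x)) * x ^ (d - 2) * a := by rw [hxe]
      _ = ((d:ℝ) - 1) * ((1 - x) * x ^ (d - 2)) * a := by ring
      _ = ((d:ℝ) - 1) * ((1 - y) * y ^ (d - 2)) * a := by rw [hconstr]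
      _ = (((d:ℝ) - 1) * (1 - y)) * a * y ^ (d - 2) := by ring
      _ = (1 - b) * a * y ^ (d - 2) := by rw [hb_def]; ring
  have hrhs : y * (-(dpsi d y)) = b * y ^ (d - 2) := by
    rw [hdpy, ← mul_assoc, hye]; ring
  rw [hlhs, hrhs]
  have hyp : (0:ℝ) < y ^ (d - 2) := pow_pos hy0 _
  have hfin : (1 - b) * a < b := by nlinarith
  nlinarith

noncomputable def Lam (d : ℕ) (x : ℝ) : ℝ := (1 - x) / (x * (yh d x) ^ (d - 1))

lemma Lam_hasDeriv (hd : 3 ≤ d) {x : ℝ} (hx : x ∈ Ioo 0 (t0 d)) :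
    HasDerivAt (Lam d)
      (((-1) * (x * (yh d x) ^ (d - 1)) - (1 - x) *
        (1 * (yh d x) ^ (d - 1) +
          x * (((d:ℝ) - 1) * (yh d x) ^ (d - 2) * ((dpsi d (yh d x))⁻¹ * dpsi d x)))) /
        (x * (yh d x) ^ (d - 1)) ^ 2) x := by
  have hy0 : 0 < yh d x := yh_one_lt_pos hd hx
  have hvne : x * (yh d x) ^ (d - 1) ≠ 0 :=
    ne_of_gt (mul_pos hx.1 (pow_pos hy0 _))
  have hu : HasDerivAt (fun t : ℝ => 1 - t) (-1) x := by
    exact (hasDerivAt_id' (x := x)).const_sub (1:ℝ)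
  have hyd : HasDerivAt (yh d) ((dpsi d (yh d x))⁻¹ * dpsi d x) x := yh_hasDeriv hd hx
  have hpow : HasDerivAt (fun t : ℝ => (yh d t) ^ (d - 1))
      (((d:ℝ) - 1) * (yh d x) ^ (d - 2) * ((dpsi d (yh d x))⁻¹ * dpsi d x)) x := by
    have h := hyd.pow (d - 1)
    have c1 : ((d - 1 : ℕ) : ℝ) = (d:ℝ) - 1 := by
      have h1 : (1:ℕ) ≤ d := by omega
      push_cast [Nat.cast_sub h1]; ring
    have c2 : d - 1 - 1 = d - 2 := by omega
    rw [c1, c2] at h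
    exact h
  have hv : HasDerivAt (fun t : ℝ => t * (yh d t) ^ (d - 1))
      (1 * (yh d x) ^ (d - 1) +
        x * (((d:ℝ) - 1) * (yh d x) ^ (d - 2) * ((dpsi d (yh d x))⁻¹ * dpsi d x))) x :=
    (hasDerivAt_id x).mul hpow
  exact hu.div hv hvne

lemma Lam_deriv_neg (hd : 3 ≤ d) {x : ℝ} (hx : x ∈ Ioo 0 (t0 d)) :
    deriv (Lam d) x < 0 := by
  rw [(Lam_hasDeriv hd hx).deriv]
  have hy : yh d x ∈ Ioo (t0 d) 1 := yh_mem hd hx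
  have hy0 : 0 < yh d x := yh_one_lt_pos hd hx
  have hx0 : 0 < x := hx.1
  have hx1 : x < 1 := lt_trans hx.2 (t0_mem hd).2
  have hD : dpsi d (yh d x) < 0 := dpsi_neg hd hy
  have hDne : dpsi d (yh d x) ≠ 0 := ne_of_lt hD
  have hKI := key_ineq hd hx
  apply div_neg_of_neg_of_pos
  · -- numerator negative
    obtain ⟨c, hc_def⟩ : ∃ c : ℝ, c = (dpsi d (yh d x))⁻¹ * dpsi d x := ⟨_, rfl⟩
    rw [← hc_def]
    have hcD : c * dpsi d (yh d x) = dpsi d x := by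
      rw [hc_def]; field_simp
    -- from key_ineq : (d-1)*x*(1-x)*(c*D) < y*(-D)
    have hKI2 : ((d:ℝ) - 1) * x * (1 - x) * (c * dpsi d (yh d x))
        < yh d x * (-(dpsi d (yh d x))) := by rw [hcD]; exact hKI
    have hmain : 0 < ((d:ℝ) - 1) * x * (1 - x) * c + yh d x := by nlinarith
    have hyE : (0:ℝ) < (yh d x) ^ (d - 2) := pow_pos hy0 _
    have hsplit : (yh d x) ^ (d - 1) = yh d x * (yh d x) ^ (d - 2) := by
      rw [← pow_succ']; congr 1; omega
    have : (-1) * (x * (yh d x) ^ (d - 1)) - (1 - x) *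
        (1 * (yh d x) ^ (d - 1) +
          x * (((d:ℝ) - 1) * (yh d x) ^ (d - 2) * c))
        = -((((d:ℝ) - 1) * x * (1 - x) * c + yh d x) * (yh d x) ^ (d - 2)) := by
      rw [hsplit]; ring
    rw [this]
    have := mul_pos hmain hyE
    linarith
  · have hvne : 0 < x * (yh d x) ^ (d - 1) := mul_pos hx0 (pow_pos hy0 _)
    positivity

lemma Lam_strictAntiOn (hd : 3 ≤ d) : StrictAntiOn (Lam d) (Ioo 0 (t0 d)) := by
  apply strictAntiOn_of_deriv_neg (convex_Ioo _ _)
  · intro x hx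
    exact (Lam_hasDeriv hd hx).differentiableAt.continuousAt.continuousWithinAt
  · intro x hx
    rw [interior_Ioo] at hx
    exact Lam_deriv_neg hd hx

lemma Lam_continuousOn (hd : 3 ≤ d) : ContinuousOn (Lam d) (Ioo 0 (t0 d)) :=
  fun x hx => (Lam_hasDeriv hd hx).differentiableAt.continuousAt.continuousWithinAt

lemma Lam_pos (hd : 3 ≤ d) {x : ℝ} (hx : x ∈ Ioo 0 (t0 d)) : 0 < Lam d x := by
  have hy0 : 0 < yh d x := yh_one_lt_pos hd hx
  have hx1 : x < 1 := lt_trans hx.2 (t0_mem hd).2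
  exact div_pos (by linarith) (mul_pos hx.1 (pow_pos hy0 _))

lemma Lam_eqn (hd : 3 ≤ d) {x lam : ℝ} (hx : x ∈ Ioo 0 (t0 d)) (h : Lam d x = lam) :
    1 - x = lam * (x * (yh d x) ^ (d - 1)) ∧
      1 - yh d x = lam * (yh d x * x ^ (d - 1)) := by
  have hy : yh d x ∈ Ioo (t0 d) 1 := yh_mem hd hx
  have hy0 : 0 < yh d x := yh_one_lt_pos hd hx
  have hx0 : 0 < x := hx.1
  have hvne : x * (yh d x) ^ (d - 1) ≠ 0 := ne_of_gt (mul_pos hx0 (pow_pos hy0 _))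
  have h1 : 1 - x = lam * (x * (yh d x) ^ (d - 1)) := by
    rw [← h, Lam, div_mul_cancel₀ _ hvne]
  refine ⟨h1, ?_⟩
  have hconstr : (1 - yh d x) * (yh d x) ^ (d - 2) = (1 - x) * x ^ (d - 2) := by
    have := yh_psi hd hx
    rwa [psi_eq hd, psi_eq hd] at this
  have hyE : ((yh d x) : ℝ) ^ (d - 2) ≠ 0 := ne_of_gt (pow_pos hy0 _)
  apply mul_right_cancel₀ hyE
  rw [hconstr, h1]
  have hxsplit : x ^ (d - 1) = x * x ^ (d - 2) := by rw [← pow_succ']; congr 1; omega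
  have hysplit : (yh d x) ^ (d - 1) = yh d x * (yh d x) ^ (d - 2) := by
    rw [← pow_succ']; congr 1; omega
  rw [hxsplit, hysplit]; ring

lemma lamc_eq (hd : 3 ≤ d) : hcLamc d = (1 - t0 d) / (t0 d * (t0 d) ^ (d - 1)) := by
  have h2 := dg2 hd
  have hne1 : ((d:ℝ) - 1) ≠ 0 := by linarith
  have hne2 : ((d:ℝ) - 2) ≠ 0 := by linarith
  have hsub : 1 - t0 d = 1 / ((d:ℝ) - 1) := by
    rw [t0]; field_simp; norm_num
  have hsplit : t0 d * (t0 d) ^ (d - 1) = (t0 d) ^ d := by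
    rw [← pow_succ']; congr 1; omega
  have hsplit2 : ((d:ℝ) - 1) ^ d = ((d:ℝ) - 1) ^ (d - 1) * ((d:ℝ) - 1) := by
    rw [← pow_succ]; congr 1; omega
  have hp1 : ((d:ℝ) - 1) ^ d ≠ 0 := pow_ne_zero _ hne1
  have hp2 : ((d:ℝ) - 2) ^ d ≠ 0 := pow_ne_zero _ hne2
  rw [hsub, hsplit, t0, div_pow, hcLamc]
  field_simp
  rw [hsplit2]
  ring

lemma lamc_pos (hd : 3 ≤ d) : 0 < hcLamc d := by
  have h2 := dg2 hd
  rw [hcLamc]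
  apply div_pos (pow_pos (by linarith) _) (pow_pos (by linarith) _)

lemma Ioo_mem_nhdsLT (hd : 3 ≤ d) : Ioo (0:ℝ) (t0 d) ∈ nhdsWithin (t0 d) (Iio (t0 d)) := by
  apply Ioo_mem_nhdsLT_of_mem
  exact ⟨(t0_mem hd).1, le_rfl⟩

lemma yh_tendsto (hd : 3 ≤ d) :
    Tendsto (yh d) (nhdsWithin (t0 d) (Iio (t0 d))) (nhds (t0 d)) := by
  rw [tendsto_order]
  constructor
  · intro c hc
    filter_upwards [Ioo_mem_nhdsLT hd] with z hz
    exact lt_trans hc (yh_mem hd hz).1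
  · intro c hc
    obtain ⟨c', hc1', hc2', hc3'⟩ : ∃ c', t0 d < c' ∧ c' < 1 ∧ c' ≤ c := by
      refine ⟨min c ((t0 d + 1) / 2), ?_, ?_, min_le_left _ _⟩
      · apply lt_min hc; linarith [(t0_mem hd).2]
      · apply min_lt_of_right_lt; linarith [(t0_mem hd).2]
    have hpsilt : psi d c' < psi d (t0 d) := psi_lt_t0_right hd ⟨hc1', hc2'⟩
    have htend : Tendsto (psi d) (nhdsWithin (t0 d) (Iio (t0 d))) (nhds (psi d (t0 d))) :=
      ((psi_contOn.continuousAt (x := t0 d) (by simp)).tendsto).mono_left nhdsWithin_le_nhds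
    filter_upwards [Ioo_mem_nhdsLT hd, htend.eventually (eventually_gt_nhds hpsilt)] with z hz hgz
    -- hgz : psi d c' < psi d z = psi d (yh d z)
    have hyz : yh d z ∈ Ioo (t0 d) 1 := yh_mem hd hz
    have hpsiy : psi d (yh d z) = psi d z := yh_psi hd hz
    by_contra hcon
    push_neg at hcon
    have hcy : c' ≤ yh d z := le_trans hc3' hcon
    have := ((psi_strictAntiOn hd).le_iff_ge
      (⟨le_of_lt hyz.1, le_of_lt hyz.2⟩ : yh d z ∈ Icc (t0 d) 1)
      (⟨le_of_lt hc1', le_of_lt hc2'⟩ : c' ∈ Icc (t0 d) 1)).mpr hcy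
    rw [hpsiy] at this
    linarith

lemma Lam_tendsto (hd : 3 ≤ d) :
    Tendsto (Lam d) (nhdsWithin (t0 d) (Iio (t0 d))) (nhds (hcLamc d)) := by
  have hxx : Tendsto (fun x : ℝ => x) (nhdsWithin (t0 d) (Iio (t0 d))) (nhds (t0 d)) :=
    tendsto_id.mono_left nhdsWithin_le_nhds
  have h1 : Tendsto (fun x : ℝ => 1 - x) (nhdsWithin (t0 d) (Iio (t0 d))) (nhds (1 - t0 d)) :=
    tendsto_const_nhds.sub hxx
  have h2 : Tendsto (fun x : ℝ => x * (yh d x) ^ (d - 1))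
      (nhdsWithin (t0 d) (Iio (t0 d))) (nhds (t0 d * (t0 d) ^ (d - 1))) :=
    hxx.mul ((yh_tendsto hd).pow (d - 1))
  have hne : t0 d * (t0 d) ^ (d - 1) ≠ 0 :=
    ne_of_gt (mul_pos (t0_mem hd).1 (pow_pos (t0_mem hd).1 _))
  have := h1.div h2 hne
  rw [← lamc_eq hd] at this
  exact this

lemma Lam_gt_lamc (hd : 3 ≤ d) {x : ℝ} (hx : x ∈ Ioo 0 (t0 d)) : hcLamc d < Lam d x := by
  set x' : ℝ := (x + t0 d) / 2 with hx'def
  have hx'mem : x' ∈ Ioo 0 (t0 d) := by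
    constructor
    · have := hx.1; have := hx.2; rw [hx'def]; nlinarith [(t0_mem hd).1]
    · have := hx.2; rw [hx'def]; linarith
  have hlt : Lam d x' < Lam d x := Lam_strictAntiOn hd hx hx'mem (by rw [hx'def]; linarith [hx.2])
  have hge : hcLamc d ≤ Lam d x' := by
    by_contra hcon
    push_neg at hcon
    have h1 : ∀ᶠ z in nhdsWithin (t0 d) (Iio (t0 d)), Lam d x' < Lam d z :=
      (Lam_tendsto hd).eventually (eventually_gt_nhds hcon)
    have h2 : ∀ᶠ z in nhdsWithin (t0 d) (Iio (t0 d)), z ∈ Ioo x' (t0 d) := by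
      apply Ioo_mem_nhdsLT_of_mem
      exact ⟨hx'mem.2, le_rfl⟩
    obtain ⟨z, hz1, hz2⟩ := (h1.and h2).exists
    have : Lam d z < Lam d x' :=
      Lam_strictAntiOn hd hx'mem ⟨lt_trans hx'mem.1 hz2.1, hz2.2⟩ hz2.1
    linarith
  linarith

lemma Lam_surj (hd : 3 ≤ d) {lam : ℝ} (hl : hcLamc d < lam) :
    ∃ x ∈ Ioo 0 (t0 d), Lam d x = lam := by
  have hlpos : 0 < lam := lt_trans (lamc_pos hd) hl
  -- find x1 with Lam x1 < lam
  have h1 : ∀ᶠ z in nhdsWithin (t0 d) (Iio (t0 d)), Lam d z < lam :=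
    (Lam_tendsto hd).eventually (eventually_lt_nhds hl)
  have h1' : ∀ᶠ z in nhdsWithin (t0 d) (Iio (t0 d)), z ∈ Ioo (0:ℝ) (t0 d) :=
    Ioo_mem_nhdsLT hd
  obtain ⟨x1, hx1a, hx1b⟩ := (h1.and h1').exists
  -- find x0 ≤ x1 with lam ≤ Lam x0
  set x0 : ℝ := min (1 / (1 + lam)) (x1 / 2) with hx0def
  have hx0pos : 0 < x0 := by
    apply lt_min
    · positivity
    · linarith [hx1b.1]
  have hx0lt : x0 < x1 := lt_of_le_of_lt (min_le_right _ _) (by linarith [hx1b.1])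
  have hx0mem : x0 ∈ Ioo 0 (t0 d) := ⟨hx0pos, lt_trans hx0lt hx1b.2⟩
  have hx0le : x0 ≤ 1 / (1 + lam) := min_le_left _ _
  have hlam_le : lam ≤ Lam d x0 := by
    have hy : yh d x0 ∈ Ioo (t0 d) 1 := yh_mem hd hx0mem
    have hy0 : 0 < yh d x0 := yh_one_lt_pos hd hx0mem
    have hyle : (yh d x0) ^ (d - 1) ≤ 1 :=
      pow_le_one₀ (le_of_lt hy0) (le_of_lt hy.2)
    have hden : 0 < x0 * (yh d x0) ^ (d - 1) := mul_pos hx0pos (pow_pos hy0 _)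
    have hx0lt1 : x0 < 1 := by
      have : 1 / (1 + lam) < 1 := by
        rw [div_lt_one (by linarith)]; linarith
      linarith [hx0le]
    have step1 : (1 - x0) / x0 ≤ Lam d x0 := by
      rw [Lam]
      apply div_le_div_of_nonneg_left (by linarith) hden
      calc x0 * (yh d x0) ^ (d - 1) ≤ x0 * 1 := by
            exact mul_le_mul_of_nonneg_left hyle (le_of_lt hx0pos)
        _ = x0 := mul_one x0
    have step2 : lam ≤ (1 - x0) / x0 := by
      rw [le_div_iff₀ hx0pos]
      have : x0 * (1 + lam) ≤ 1 := by
        rw [← le_div_iff₀ (by linarith : (0:ℝ) < 1 + lam)] at *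
        exact hx0le
      nlinarith
    linarith
  -- IVT
  have hsub : Icc x0 x1 ⊆ Ioo 0 (t0 d) := fun z hz => ⟨lt_of_lt_of_le hx0pos hz.1,
    lt_of_le_of_lt hz.2 hx1b.2⟩
  have hcont : ContinuousOn (Lam d) (Icc x0 x1) := (Lam_continuousOn hd).mono hsub
  have hmem : lam ∈ Icc (Lam d x1) (Lam d x0) := ⟨le_of_lt hx1a, hlam_le⟩
  obtain ⟨c, hc1, hc2⟩ := intermediate_value_Icc' (le_of_lt hx0lt) hcont hmem
  exact ⟨c, hsub hc1, hc2⟩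

lemma hcF_mem (hd : 3 ≤ d) {lam q : ℝ} (hl : 0 < lam) (hq : q ∈ Ioo (0:ℝ) 1) :
    hcF d lam q ∈ Ioo (0:ℝ) 1 := by
  have hqp : 0 < lam * q ^ (d - 1) := mul_pos hl (pow_pos hq.1 _)
  constructor
  · rw [hcF]; positivity
  · rw [hcF, div_lt_one (by linarith)]; linarith

lemma hcF_anti (hd : 3 ≤ d) {lam u v : ℝ} (hl : 0 < lam) (hu : 0 ≤ u) (huv : u ≤ v) :
    hcF d lam v ≤ hcF d lam u := by
  have h1 : 0 < 1 + lam * u ^ (d - 1) := by positivity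
  rw [hcF, hcF]
  apply one_div_le_one_div_of_le h1
  have := pow_le_pow_left₀ hu huv (d - 1)
  nlinarith

lemma system_of_Gfix (hd : 3 ≤ d) {lam q : ℝ} (hl : 0 < lam) (hq : q ∈ Ioo (0:ℝ) 1)
    (hG : hcF d lam (hcF d lam q) = q) :
    hcF d lam q ∈ Ioo (0:ℝ) 1 ∧
      1 - q = lam * (q * (hcF d lam q) ^ (d - 1)) ∧
      1 - hcF d lam q = lam * (hcF d lam q * q ^ (d - 1)) := by
  have hy : hcF d lam q ∈ Ioo (0:ℝ) 1 := hcF_mem hd hl hq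
  have hden1 : (0:ℝ) < 1 + lam * q ^ (d - 1) := by
    have := mul_pos hl (pow_pos hq.1 (d - 1)); linarith
  have hden2 : (0:ℝ) < 1 + lam * (hcF d lam q) ^ (d - 1) := by
    have := mul_pos hl (pow_pos hy.1 (d - 1)); linarith
  have he1 : hcF d lam q * (1 + lam * q ^ (d - 1)) = 1 := by
    rw [hcF, div_mul_cancel₀ _ (ne_of_gt hden1)]
  have he2 : q * (1 + lam * (hcF d lam q) ^ (d - 1)) = 1 := by
    have h := hG
    rw [hcF] at h
    nth_rewrite 1 [← h]
    rw [div_mul_cancel₀ _ (ne_of_gt hden2)]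
  refine ⟨hy, ?_, ?_⟩ <;> nlinarith [he1, he2]

lemma Gfix_of_system (hd : 3 ≤ d) {lam x y : ℝ} (hl : 0 < lam)
    (hx : x ∈ Ioo (0:ℝ) 1) (hy : y ∈ Ioo (0:ℝ) 1)
    (h1 : 1 - x = lam * (x * y ^ (d - 1))) (h2 : 1 - y = lam * (y * x ^ (d - 1))) :
    hcF d lam x = y ∧ hcF d lam y = x := by
  constructor
  · have hyne : y ≠ 0 := ne_of_gt hy.1
    have : 1 + lam * x ^ (d - 1) = 1 / y := by
      rw [eq_div_iff hyne]; nlinarith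
    rw [hcF, this, one_div_one_div]
  · have hxne : x ≠ 0 := ne_of_gt hx.1
    have : 1 + lam * y ^ (d - 1) = 1 / x := by
      rw [eq_div_iff hxne]; nlinarith
    rw [hcF, this, one_div_one_div]

lemma psi_eq_of_system (hd : 3 ≤ d) {lam x y : ℝ}
    (h1 : 1 - x = lam * (x * y ^ (d - 1))) (h2 : 1 - y = lam * (y * x ^ (d - 1))) :
    psi d x = psi d y := by
  have hxs : x ^ (d - 1) = x * x ^ (d - 2) := by rw [← pow_succ']; congr 1; omega
  have hys : y ^ (d - 1) = y * y ^ (d - 2) := by rw [← pow_succ']; congr 1; omega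
  rw [psi_eq hd, psi_eq hd, h1, h2, hxs, hys]
  ring

lemma hcF_t0_fixed (hd : 3 ≤ d) : hcF d (hcLamc d) (t0 d) = t0 d := by
  have ht0 := t0_mem hd
  have htne : t0 d ≠ 0 := ne_of_gt ht0.1
  have htpne : (t0 d) ^ (d - 1) ≠ 0 := pow_ne_zero _ htne
  have hkey : hcLamc d * (t0 d) ^ (d - 1) = (1 - t0 d) / t0 d := by
    rw [lamc_eq hd]
    field_simp
  have hone : (1:ℝ) + (1 - t0 d) / t0 d = 1 / t0 d := by
    field_simp
    ring
  rw [hcF, hkey, hone, one_div_one_div]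

lemma qmqp_char (hd : 3 ≤ d) {qm qp : ℝ → ℝ}
    (hqm : ∀ lam : ℝ, hcLamc d < lam →
      qm lam ∈ Ioo (0:ℝ) 1 ∧ hcF d lam (hcF d lam (qm lam)) = qm lam ∧
      ∀ q ∈ Ioo (0:ℝ) 1, hcF d lam (hcF d lam q) = q → qm lam ≤ q)
    (hqp : ∀ lam : ℝ, hcLamc d < lam →
      qp lam ∈ Ioo (0:ℝ) 1 ∧ hcF d lam (hcF d lam (qp lam)) = qp lam ∧
      ∀ q ∈ Ioo (0:ℝ) 1, hcF d lam (hcF d lam q) = q → q ≤ qp lam)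
    {lam : ℝ} (hl : hcLamc d < lam) :
    qm lam ∈ Ioo 0 (t0 d) ∧ Lam d (qm lam) = lam ∧ qp lam = hcF d lam (qm lam) := by
  have hlpos : 0 < lam := lt_trans (lamc_pos hd) hl
  have ht0 := t0_mem hd
  obtain ⟨x, hx, hLx⟩ := Lam_surj hd hl
  have hy := yh_mem hd hx
  have hx01 : x ∈ Ioo (0:ℝ) 1 := ⟨hx.1, lt_trans hx.2 ht0.2⟩
  have hy01 : yh d x ∈ Ioo (0:ℝ) 1 := ⟨lt_trans ht0.1 hy.1, hy.2⟩
  obtain ⟨he1, he2⟩ := Lam_eqn hd hx hLx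
  obtain ⟨hFx, hFy⟩ := Gfix_of_system hd hlpos hx01 hy01 he1 he2
  have hGx : hcF d lam (hcF d lam x) = x := by rw [hFx, hFy]
  have hGy : hcF d lam (hcF d lam (yh d x)) = yh d x := by rw [hFy, hFx]
  obtain ⟨hm01, hmG, hmmin⟩ := hqm lam hl
  obtain ⟨hp01, hpG, hpmax⟩ := hqp lam hl
  have hqmx : qm lam ≤ x := hmmin x hx01 hGx
  have hyqp : yh d x ≤ qp lam := hpmax (yh d x) hy01 hGy
  have hxy : x < yh d x := lt_trans hx.2 hy.1
  have straddle : ∀ q ∈ Ioo (0:ℝ) 1, hcF d lam q = q → x < q ∧ q < yh d x := by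
    intro q hq hFq
    constructor
    · by_contra hcon
      push_neg at hcon
      have h1 : hcF d lam x ≤ hcF d lam q := hcF_anti hd hlpos (le_of_lt hq.1) hcon
      rw [hFx, hFq] at h1
      linarith
    · by_contra hcon
      push_neg at hcon
      have h1 : hcF d lam q ≤ hcF d lam (yh d x) := hcF_anti hd hlpos (le_of_lt hy01.1) hcon
      rw [hFy, hFq] at h1
      linarith
  -- qm part
  have hq_mem : qm lam ∈ Ioo 0 (t0 d) := ⟨hm01.1, lt_of_le_of_lt hqmx hx.2⟩
  have hm_ne : hcF d lam (qm lam) ≠ qm lam := by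
    intro h
    have := (straddle _ hm01 h).1
    linarith
  obtain ⟨hu01, hs1, hs2⟩ := system_of_Gfix hd hlpos hm01 hmG
  have hpsi_mu : psi d (qm lam) = psi d (hcF d lam (qm lam)) := psi_eq_of_system hd hs1 hs2
  have hu_gt : t0 d < hcF d lam (qm lam) := by
    by_contra hcon
    push_neg at hcon
    have : qm lam = hcF d lam (qm lam) := (psi_strictMonoOn hd).injOn
      ⟨le_of_lt hq_mem.1, le_of_lt hq_mem.2⟩ ⟨le_of_lt hu01.1, hcon⟩ hpsi_mu
    exact hm_ne this.symm
  have hu_mem : hcF d lam (qm lam) ∈ Ioo (t0 d) 1 := ⟨hu_gt, hu01.2⟩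
  have hu_eq : hcF d lam (qm lam) = yh d (qm lam) := by
    rw [yh]
    exact pinv_unique hd (psi_mem_Ioo hd hq_mem) hu_mem hpsi_mu.symm
  have hLam_m : Lam d (qm lam) = lam := by
    rw [Lam, ← hu_eq, hs1]
    exact mul_div_cancel_right₀ _
      (ne_of_gt (mul_pos hq_mem.1 (pow_pos hu01.1 _)))
  have hxm : x = qm lam := (Lam_strictAntiOn hd).injOn hx hq_mem (by rw [hLx, hLam_m])
  -- qp part
  have hqp_mem : qp lam ∈ Ioo (t0 d) 1 := ⟨lt_of_lt_of_le hy.1 hyqp, hp01.2⟩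
  have hp_ne : hcF d lam (qp lam) ≠ qp lam := by
    intro h
    have := (straddle _ hp01 h).2
    linarith
  obtain ⟨hw01, ht1, ht2⟩ := system_of_Gfix hd hlpos hp01 hpG
  have hpsi_pw : psi d (qp lam) = psi d (hcF d lam (qp lam)) := psi_eq_of_system hd ht1 ht2
  have hw_lt : hcF d lam (qp lam) < t0 d := by
    by_contra hcon
    push_neg at hcon
    have : qp lam = hcF d lam (qp lam) := (psi_strictAntiOn hd).injOn
      ⟨le_of_lt hqp_mem.1, le_of_lt hqp_mem.2⟩ ⟨hcon, le_of_lt hw01.2⟩ hpsi_pw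
    exact hp_ne this.symm
  have hw_mem : hcF d lam (qp lam) ∈ Ioo 0 (t0 d) := ⟨hw01.1, hw_lt⟩
  have hqp_eq : qp lam = yh d (hcF d lam (qp lam)) := by
    rw [yh]
    exact pinv_unique hd (psi_mem_Ioo hd hw_mem) hqp_mem (by rw [hpsi_pw])
  have hLam_w : Lam d (hcF d lam (qp lam)) = lam := by
    rw [Lam, ← hqp_eq, ht2]
    exact mul_div_cancel_right₀ _
      (ne_of_gt (mul_pos hw01.1 (pow_pos (lt_trans ht0.1 hqp_mem.1) _)))
  have hwx : hcF d lam (qp lam) = x := (Lam_strictAntiOn hd).injOn hw_mem hx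
    (by rw [hLam_w, hLx])
  refine ⟨by rw [← hxm]; exact hx, by rw [← hxm]; exact hLx, ?_⟩
  rw [hqp_eq, hwx, hxm]
  exact hu_eq.symm

end HCAux

theorem stmt4 (d : ℕ) (hd : 3 ≤ d) (qm qp : ℝ → ℝ) (qsc : ℝ)
    (hqsc : qsc ∈ Ioo (0:ℝ) 1 ∧ hcF d (hcLamc d) qsc = qsc)
    (hqscu : ∀ q ∈ Ioo (0:ℝ) 1, hcF d (hcLamc d) q = q → q = qsc)
    (hqm : ∀ lam : ℝ, hcLamc d < lam →
      qm lam ∈ Ioo (0:ℝ) 1 ∧ hcF d lam (hcF d lam (qm lam)) = qm lam ∧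
      ∀ q ∈ Ioo (0:ℝ) 1, hcF d lam (hcF d lam q) = q → qm lam ≤ q)
    (hqp : ∀ lam : ℝ, hcLamc d < lam →
      qp lam ∈ Ioo (0:ℝ) 1 ∧ hcF d lam (hcF d lam (qp lam)) = qp lam ∧
      ∀ q ∈ Ioo (0:ℝ) 1, hcF d lam (hcF d lam q) = q → q ≤ qp lam) :
    ContinuousOn qm (Ioi (hcLamc d)) ∧
    ContinuousOn qp (Ioi (hcLamc d)) ∧
    Tendsto qp (nhdsWithin (hcLamc d) (Ioi (hcLamc d))) (nhds qsc) ∧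
    Tendsto qm (nhdsWithin (hcLamc d) (Ioi (hcLamc d))) (nhds qsc) := by
  have ht0 := HCAux.t0_mem hd
  have hchar := fun (lam : ℝ) (hl : hcLamc d < lam) => HCAux.qmqp_char hd hqm hqp hl
  have hqsc_t0 : qsc = HCAux.t0 d := (hqscu (HCAux.t0 d) ht0 (HCAux.hcF_t0_fixed hd)).symm
  -- qm strictly antitone on Ioi
  have hanti : StrictAntiOn qm (Ioi (hcLamc d)) := by
    intro l1 h1 l2 h2 h12
    by_contra hcon
    push_neg at hcon
    have hle := ((HCAux.Lam_strictAntiOn hd).le_iff_ge (hchar l2 h2).1 (hchar l1 h1).1).mpr hcon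
    rw [(hchar l1 h1).2.1, (hchar l2 h2).2.1] at hle
    linarith
  -- image of qm
  have himg : qm '' (Ioi (hcLamc d)) = Ioo 0 (HCAux.t0 d) := by
    apply Subset.antisymm
    · rintro _ ⟨l, hl, rfl⟩
      exact (hchar l hl).1
    · rintro x hx
      have hl : hcLamc d < HCAux.Lam d x := HCAux.Lam_gt_lamc hd hx
      exact ⟨HCAux.Lam d x, hl,
        (HCAux.Lam_strictAntiOn hd).injOn (hchar _ hl).1 hx (by rw [(hchar _ hl).2.1])⟩
  have hcont_m : ContinuousOn qm (Ioi (hcLamc d)) := by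
    intro l hl
    apply ContinuousAt.continuousWithinAt
    apply HCAux.continuousAt_of_strictAntiOn hanti (Ioi_mem_nhds hl)
    rw [himg]
    exact Ioo_mem_nhds (hchar l hl).1.1 (hchar l hl).1.2
  -- qm tendsto t0
  have htend_m : Tendsto qm (nhdsWithin (hcLamc d) (Ioi (hcLamc d))) (nhds (HCAux.t0 d)) := by
    rw [tendsto_order]
    constructor
    · intro c hc
      have hx0 : max c (HCAux.t0 d / 2) ∈ Ioo 0 (HCAux.t0 d) := by
        constructor
        · exact lt_of_lt_of_le (by linarith [ht0.1]) (le_max_right _ _)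
        · apply max_lt hc; linarith [ht0.1]
      have hL : hcLamc d < HCAux.Lam d (max c (HCAux.t0 d / 2)) := HCAux.Lam_gt_lamc hd hx0
      have hev : Ioo (hcLamc d) (HCAux.Lam d (max c (HCAux.t0 d / 2))) ∈
          nhdsWithin (hcLamc d) (Ioi (hcLamc d)) :=
        Ioo_mem_nhdsGT_of_mem ⟨le_rfl, hL⟩
      filter_upwards [hev] with l hlmem
      have hl : hcLamc d < l := hlmem.1
      have hgt : max c (HCAux.t0 d / 2) < qm l := by
        by_contra hcon
        push_neg at hcon
        have hle := ((HCAux.Lam_strictAntiOn hd).le_iff_ge hx0 (hchar l hl).1).mpr hcon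
        rw [(hchar l hl).2.1] at hle
        linarith [hlmem.2]
      exact lt_of_le_of_lt (le_max_left _ _) hgt
    · intro c hc
      filter_upwards [self_mem_nhdsWithin] with l hl
      exact lt_trans (hchar l hl).1.2 hc
  -- qp as explicit function of qm
  have hqp_eqOn : ∀ l ∈ Ioi (hcLamc d), qp l = 1 / (1 + l * (qm l) ^ (d - 1)) := by
    intro l hl
    rw [(hchar l hl).2.2, hcF]
  have hden_pos : ∀ l ∈ Ioi (hcLamc d), (0:ℝ) < 1 + l * (qm l) ^ (d - 1) := by
    intro l hl
    have hlpos : 0 < l := lt_trans (HCAux.lamc_pos hd) hl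
    have := mul_pos hlpos (pow_pos (hchar l hl).1.1 (d - 1))
    linarith
  have hcont_p : ContinuousOn qp (Ioi (hcLamc d)) := by
    apply ContinuousOn.congr (f := fun l : ℝ => 1 / (1 + l * (qm l) ^ (d - 1)))
    · apply ContinuousOn.div continuousOn_const
      · exact continuousOn_const.add (continuousOn_id.mul (hcont_m.pow _))
      · intro l hl
        exact ne_of_gt (hden_pos l hl)
    · intro l hl
      exact hqp_eqOn l hl
  -- qp tendsto
  have hlim_den : (0:ℝ) < 1 + hcLamc d * (HCAux.t0 d) ^ (d - 1) := by
    have := mul_pos (HCAux.lamc_pos hd) (pow_pos ht0.1 (d - 1))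
    linarith
  have hval : (1:ℝ) / (1 + hcLamc d * (HCAux.t0 d) ^ (d - 1)) = HCAux.t0 d := by
    have := HCAux.hcF_t0_fixed hd
    rwa [hcF] at this
  have htend_p : Tendsto qp (nhdsWithin (hcLamc d) (Ioi (hcLamc d))) (nhds (HCAux.t0 d)) := by
    have hid : Tendsto (fun l : ℝ => l) (nhdsWithin (hcLamc d) (Ioi (hcLamc d)))
        (nhds (hcLamc d)) := tendsto_id.mono_left nhdsWithin_le_nhds
    have hg : Tendsto (fun l : ℝ => 1 / (1 + l * (qm l) ^ (d - 1)))
        (nhdsWithin (hcLamc d) (Ioi (hcLamc d)))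
        (nhds ((1:ℝ) / (1 + hcLamc d * (HCAux.t0 d) ^ (d - 1)))) :=
      tendsto_const_nhds.div
        (tendsto_const_nhds.add (hid.mul (htend_m.pow _))) (ne_of_gt hlim_den)
    rw [hval] at hg
    apply hg.congr'
    filter_upwards [self_mem_nhdsWithin] with l hl
    exact (hqp_eqOn l hl).symm
  rw [hqsc_t0]
  exact ⟨hcont_m, hcont_p, htend_p, htend_m⟩
end

section
/- Let d ≥ 3 be an integer, λ > 0, and let q^- ≤ q^+ in (0,1) satisfy q^- = F_λ(q^+) and q^+ = F_λ(q^-). Then for all q_1, …, q_d ∈ [q^-, q^+], (q_1 + ⋯ + q_d)/(1 + λ q_1 q_2 ⋯ q_d) ≥ d · (1/q^- + 1/q^+ − 1)^{-1}, with equality when q_1 = ⋯ = q_d = q^- or q_1 = ⋯ = q_d = q^+; moreover, if q^- < q^+ these two constant tuples are the only cases of equality. -/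
open Set

theorem stmt6 (d : ℕ) (hd : 3 ≤ d) (lam : ℝ) (hlam : 0 < lam)
    (qm qp : ℝ) (hqm : qm ∈ Ioo (0:ℝ) 1) (hqp : qp ∈ Ioo (0:ℝ) 1)
    (hle : qm ≤ qp) (h1 : qm = hcF d lam qp) (h2 : qp = hcF d lam qm) :
    (∀ q : Fin d → ℝ, (∀ i, q i ∈ Icc qm qp) →
      (d : ℝ) * (1 / qm + 1 / qp - 1)⁻¹ ≤ (∑ i, q i) / (1 + lam * ∏ i, q i)) ∧
    ((d : ℝ) * qm) / (1 + lam * qm ^ d) = (d : ℝ) * (1 / qm + 1 / qp - 1)⁻¹ ∧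
    ((d : ℝ) * qp) / (1 + lam * qp ^ d) = (d : ℝ) * (1 / qm + 1 / qp - 1)⁻¹ ∧
    (qm < qp → ∀ q : Fin d → ℝ, (∀ i, q i ∈ Icc qm qp) →
      (∑ i, q i) / (1 + lam * ∏ i, q i) = (d : ℝ) * (1 / qm + 1 / qp - 1)⁻¹ →
      (∀ i, q i = qm) ∨ (∀ i, q i = qp)) := by
  obtain ⟨hqm0, hqm1⟩ := hqm
  obtain ⟨hqp0, hqp1⟩ := hqp
  have hd2 : 2 ≤ d := by omega
  have hd1 : d - 1 + 1 = d := by omega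
  have hdR : (0:ℝ) < d := by positivity
  obtain ⟨B, hB⟩ : ∃ B : ℝ, B = 1/qm + 1/qp - 1 := ⟨_, rfl⟩
  rw [show (1/qm + 1/qp - 1 : ℝ) = B from hB.symm]
  have hdenp : (0:ℝ) < 1 + lam * qp ^ (d-1) := by positivity
  have hdenm : (0:ℝ) < 1 + lam * qm ^ (d-1) := by positivity
  have e1 : qm * (1 + lam * qp ^ (d-1)) = 1 := by
    rw [h1]; simp only [hcF]; rw [one_div, inv_mul_cancel₀ hdenp.ne']
  have e2 : qp * (1 + lam * qm ^ (d-1)) = 1 := by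
    rw [h2]; simp only [hcF]; rw [one_div, inv_mul_cancel₀ hdenm.ne']
  have lam_p : qm * (lam * qp ^ (d-1)) = 1 - qm := by linear_combination e1
  have lam_m : qp * (lam * qm ^ (d-1)) = 1 - qp := by linear_combination e2
  have cm : qm * (1/qm) = 1 := mul_one_div_cancel hqm0.ne'
  have cp : qp * (1/qp) = 1 := mul_one_div_cancel hqp0.ne'
  have EmB : qm * B = 1 + lam * qm ^ d := by
    have h' : qm * qp * B = qp * (1 + lam * qm ^ d) := by
      rw [hB, ← hd1, pow_succ]
      linear_combination qp * cm + qm * cp - qm * lam_m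
    exact mul_left_cancel₀ hqp0.ne' (by linear_combination h')
  have EpB : qp * B = 1 + lam * qp ^ d := by
    have h' : qm * qp * B = qm * (1 + lam * qp ^ d) := by
      rw [hB, ← hd1, pow_succ]
      linear_combination qp * cm + qm * cp - qp * lam_p
    exact mul_left_cancel₀ hqm0.ne' (by linear_combination h')
  have hBpos : 0 < B := by
    nlinarith [EmB, pow_pos hqm0 d, hqm0, mul_pos hlam (pow_pos hqm0 d)]
  have key : ∀ x ∈ Icc qm qp, 1 + lam * x ^ d ≤ x * B := by
    intro x hx
    rw [← segment_eq_Icc hle] at hx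
    obtain ⟨a, b, ha, hb, hab, rfl⟩ := hx
    have hpow := (convexOn_pow d).2 (mem_Ici.mpr hqm0.le) (mem_Ici.mpr hqp0.le) ha hb hab
    simp only [smul_eq_mul] at hpow ⊢
    have h1' := mul_le_mul_of_nonneg_left hpow hlam.le
    have e3 : a * (qm * B) = a * (1 + lam * qm ^ d) := by rw [EmB]
    have e4 : b * (qp * B) = b * (1 + lam * qp ^ d) := by rw [EpB]
    nlinarith [h1', e3, e4, hab]
  have core : ∀ q : Fin d → ℝ, (∀ i, q i ∈ Icc qm qp) →
      0 < ∏ i, q i ∧ (∑ i, q i) / d ∈ Icc qm qp ∧ (∏ i, q i) ≤ ((∑ i, q i) / d) ^ d ∧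
        (d:ℝ) * ((∑ i, q i) / d) = ∑ i, q i := by
    intro q hq
    have hqi0 : ∀ i, 0 < q i := fun i => lt_of_lt_of_le hqm0 (hq i).1
    have hP0 : 0 < ∏ i, q i := Finset.prod_pos fun i _ => hqi0 i
    have hdne : (d:ℝ) ≠ 0 := hdR.ne'
    have hsum_lo : (d:ℝ) * qm ≤ ∑ i, q i := by
      have h := Finset.sum_le_sum (fun i (_ : i ∈ Finset.univ) => (hq i).1)
      simpa [Finset.sum_const, Finset.card_fin, nsmul_eq_mul] using h
    have hsum_hi : ∑ i, q i ≤ (d:ℝ) * qp := by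
      have h := Finset.sum_le_sum (fun i (_ : i ∈ Finset.univ) => (hq i).2)
      simpa [Finset.sum_const, Finset.card_fin, nsmul_eq_mul] using h
    have hm : (∑ i, q i) / d ∈ Icc qm qp := by
      constructor
      · rw [le_div_iff₀ hdR]; linarith
      · rw [div_le_iff₀ hdR]; linarith
    refine ⟨hP0, hm, ?_, by field_simp⟩
    have h := Real.geom_mean_le_arith_mean_weighted Finset.univ (fun _ : Fin d => (d:ℝ)⁻¹) q
      (fun i _ => by positivity)
      (by rw [Finset.sum_const, Finset.card_univ, Fintype.card_fin, nsmul_eq_mul,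
            mul_inv_cancel₀ hdne])
      (fun i _ => (hqi0 i).le)
    have hsum : ∑ i : Fin d, (d:ℝ)⁻¹ * q i = (∑ i, q i) / d := by
      rw [← Finset.mul_sum, div_eq_inv_mul]
    rw [hsum] at h
    have hL : (∏ i, q i ^ ((d:ℝ)⁻¹)) ^ d = ∏ i, q i := by
      rw [← Finset.prod_pow]
      refine Finset.prod_congr rfl fun i _ => ?_
      rw [← Real.rpow_natCast (q i ^ ((d:ℝ)⁻¹)) d, ← Real.rpow_mul (hqi0 i).le,
        inv_mul_cancel₀ hdne, Real.rpow_one]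
    calc ∏ i, q i = (∏ i, q i ^ ((d:ℝ)⁻¹)) ^ d := hL.symm
      _ ≤ ((∑ i, q i) / d) ^ d :=
        pow_le_pow_left₀ (Finset.prod_nonneg fun i _ => (Real.rpow_nonneg (hqi0 i).le _)) h d
  refine ⟨?_, ?_, ?_, ?_⟩
  · intro q hq
    obtain ⟨hP0, hm, hPm, hdm⟩ := core q hq
    have hden : 0 < 1 + lam * ∏ i, q i := by positivity
    rw [← div_eq_mul_inv, div_le_div_iff₀ hBpos hden]
    have k := key _ hm
    have f1' : (d:ℝ) * (lam * ∏ i, q i) ≤ (d:ℝ) * (lam * ((∑ i, q i) / d) ^ d) :=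
      mul_le_mul_of_nonneg_left (mul_le_mul_of_nonneg_left hPm hlam.le) hdR.le
    have f2 : (d:ℝ) * (1 + lam * ((∑ i, q i) / d) ^ d) ≤ (d:ℝ) * (((∑ i, q i) / d) * B) :=
      mul_le_mul_of_nonneg_left k hdR.le
    have f3' : (d:ℝ) * ((∑ i, q i) / d) * B = (∑ i, q i) * B := by rw [hdm]
    linarith [f1', f2, f3']
  · rw [← EmB]; field_simp
  · rw [← EpB]; field_simp
  · intro hlt q hq heq
    have keylt : ∀ x, qm < x → x < qp → 1 + lam * x ^ d < x * B := by
      intro x h1x h2x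
      have hx : x ∈ openSegment ℝ qm qp := by
        rw [openSegment_eq_Ioo hlt]; exact ⟨h1x, h2x⟩
      obtain ⟨a, b, ha, hb, hab, rfl⟩ := hx
      have hpow := (strictConvexOn_pow hd2).2 (mem_Ici.mpr hqm0.le) (mem_Ici.mpr hqp0.le)
        (ne_of_lt hlt) ha hb hab
      simp only [smul_eq_mul] at hpow ⊢
      have h1' := mul_lt_mul_of_pos_left hpow hlam
      have e3 : a * (qm * B) = a * (1 + lam * qm ^ d) := by rw [EmB]
      have e4 : b * (qp * B) = b * (1 + lam * qp ^ d) := by rw [EpB]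
      linarith [h1', e3, e4, hab]
    obtain ⟨hP0, hm, hPm, hdm⟩ := core q hq
    have hden : 0 < 1 + lam * ∏ i, q i := by positivity
    have hSB : (∑ i, q i) * B = (d:ℝ) * (1 + lam * ∏ i, q i) := by
      rw [div_eq_iff hden.ne'] at heq
      calc (∑ i, q i) * B = ((d:ℝ) * B⁻¹ * (1 + lam * ∏ i, q i)) * B := by rw [← heq]
        _ = (d:ℝ) * (B⁻¹ * B) * (1 + lam * ∏ i, q i) := by ring
        _ = (d:ℝ) * (1 + lam * ∏ i, q i) := by rw [inv_mul_cancel₀ hBpos.ne', mul_one]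
    obtain ⟨m, hmdef⟩ : ∃ m : ℝ, m = (∑ i, q i) / d := ⟨_, rfl⟩
    rw [← hmdef] at hm hPm hdm
    have k := key _ hm
    have f1' : (d:ℝ) * (lam * ∏ i, q i) ≤ (d:ℝ) * (lam * m ^ d) :=
      mul_le_mul_of_nonneg_left (mul_le_mul_of_nonneg_left hPm hlam.le) hdR.le
    have hup : (d:ℝ) * (m * B) ≤ (d:ℝ) * (1 + lam * m ^ d) := by
      have f3' : (d:ℝ) * m * B = (∑ i, q i) * B := by rw [hdm]
      linarith only [f1', f3', hSB]
    have heqm : 1 + lam * m ^ d = m * B :=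
      le_antisymm k (le_of_mul_le_mul_left hup hdR)
    have hmm : m = qm ∨ m = qp := by
      by_contra hcon
      push_neg at hcon
      have h1m : qm < m := lt_of_le_of_ne hm.1 (Ne.symm hcon.1)
      have h2m : m < qp := lt_of_le_of_ne hm.2 hcon.2
      exact absurd heqm (keylt m h1m h2m).ne
    rcases hmm with h | h
    · left
      have hsq : ∑ i, q i = (d:ℝ) * qm := by rw [← hdm, h]
      have hsum0 : ∑ i, (q i - qm) = 0 := by
        rw [Finset.sum_sub_distrib, hsq, Finset.sum_const, Finset.card_univ, Fintype.card_fin,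
          nsmul_eq_mul, sub_self]
      intro i
      have := (Finset.sum_eq_zero_iff_of_nonneg
        (fun i _ => sub_nonneg.mpr (hq i).1)).mp hsum0 i (Finset.mem_univ i)
      linarith [this]
    · right
      have hsq : ∑ i, q i = (d:ℝ) * qp := by rw [← hdm, h]
      have hsum0 : ∑ i, (qp - q i) = 0 := by
        rw [Finset.sum_sub_distrib, hsq, Finset.sum_const, Finset.card_univ, Fintype.card_fin,
          nsmul_eq_mul, sub_self]
      intro i
      have := (Finset.sum_eq_zero_iff_of_nonneg
        (fun i _ => sub_nonneg.mpr (hq i).2)).mp hsum0 i (Finset.mem_univ i)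
      linarith [this]
end

section
/- Fix an integer d ≥ 3. For λ > λ_c(d), let q^+(λ) be the largest fixed point of F_λ ∘ F_λ in (0,1) and let q^-(λ) = F_λ(q^+(λ)). Then q^+(λ) → 1 and q^-(λ) → 0 as λ → ∞, and the Bethe free energy Φ(λ) = Φ_λ(q^+(λ), q^-(λ)) satisfies lim_{λ→∞} [Φ(λ) − (1/2)log(1+λ)] = 0. -/
open Set Filter

/-- The bipartite hard-core Bethe free energy functional. -/
noncomputable def hcPhi (d : ℕ) (lam a b : ℝ) : ℝ :=
  (1/2) * Real.log (1 + lam * a ^ d) + (1/2) * Real.log (1 + lam * b ^ d)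
    - ((d:ℝ)/2) * Real.log (a + b - a * b)

lemma hcF_pos (d : ℕ) {lam q : ℝ} (hlam : 0 ≤ lam) (hq : 0 ≤ q) : 0 < hcF d lam q := by
  have h := mul_nonneg hlam (pow_nonneg hq (d-1))
  unfold hcF
  exact div_pos one_pos (by linarith)

lemma hcF_lt_one (d : ℕ) {lam q : ℝ} (hlam : 0 < lam) (hq : 0 < q) :
    hcF d lam q < 1 := by
  have h := mul_pos hlam (pow_pos hq (d-1))
  rw [hcF, div_lt_one (by linarith)]
  linarith

lemma hcF_le_one (d : ℕ) {lam q : ℝ} (hlam : 0 ≤ lam) (hq : 0 ≤ q) : hcF d lam q ≤ 1 := by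
  have h := mul_nonneg hlam (pow_nonneg hq (d-1))
  rw [hcF, div_le_one (by linarith)]
  linarith

lemma hcLamc_pos (d : ℕ) (hd : 3 ≤ d) : 0 < hcLamc d := by
  have h3 : (3:ℝ) ≤ (d:ℝ) := by exact_mod_cast hd
  exact div_pos (pow_pos (by linarith) _) (pow_pos (by linarith) _)

-- step 1: b ≤ F(F(b)) for lam large
lemma hcFF_ge (d : ℕ) (hd : 3 ≤ d) {b lam : ℝ} (hb0 : 0 < b) (hb1 : b < 1)
    (hl1 : 1 ≤ lam) (hlK : b/((1-b)*b^((d-1)*(d-1))) ≤ lam) :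
    b ≤ hcF d lam (hcF d lam b) := by
  set e : ℕ := d - 1 with hedef
  have he2 : 2 ≤ e := by omega
  have hl0 : (0:ℝ) < lam := by linarith
  have hu_pos : 0 < hcF d lam b := hcF_pos d hl0.le hb0.le
  set u : ℝ := hcF d lam b with hudef
  have hbe : 0 < b ^ e := pow_pos hb0 e
  have hbee : 0 < b ^ (e*e) := pow_pos hb0 _
  have hu_le : u ≤ 1/(lam * b^e) := by
    rw [hudef, hcF, hedef]
    apply one_div_le_one_div_of_le (mul_pos hl0 hbe)
    linarith
  have hkey : lam * u ^ e ≤ (1-b)/b := by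
    have h2 : lam * u^e ≤ lam * (1/(lam*b^e))^e :=
      mul_le_mul_of_nonneg_left (pow_le_pow_left₀ hu_pos.le hu_le e) hl0.le
    have h3 : lam * (1/(lam*b^e))^e = lam / (lam^e * b^(e*e)) := by
      rw [div_pow, one_pow, mul_pow, ← pow_mul, mul_one_div]
    have hlle : lam * lam ≤ lam ^ e := by
      calc lam * lam ≤ lam^(e-1) * lam := by
            have := le_self_pow₀ hl1 (show e - 1 ≠ 0 by omega)
            nlinarith
        _ = lam ^ e := by rw [← pow_succ]; congr 1; omega
    have h4 : lam / (lam^e * b^(e*e)) ≤ 1/(lam * b^(e*e)) := by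
      rw [div_le_div_iff₀ (by positivity) (by positivity)]
      nlinarith
    have h5 : 1/(lam * b^(e*e)) ≤ (1-b)/b := by
      rw [div_le_div_iff₀ (by positivity) hb0]
      rw [div_le_iff₀ (by nlinarith)] at hlK
      nlinarith
    rw [h3] at h2
    linarith
  have hden : 0 < 1 + lam * u ^ e := by positivity
  have heq : 1 + (1-b)/b = 1/b := by field_simp; ring
  have h6 : 1 + lam * u ^ e ≤ 1/b := by rw [← heq]; linarith
  rw [hcF, ← hedef, le_div_iff₀ hden]
  calc b * (1 + lam * u^e) ≤ b * (1/b) := by nlinarith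
    _ = 1 := by field_simp

lemma hcFF_fixed (d : ℕ) (hd : 3 ≤ d) {b lam : ℝ} (hb0 : 0 < b) (hb1 : b < 1)
    (hl0 : 0 < lam) (hGb : b ≤ hcF d lam (hcF d lam b)) :
    ∃ c, b ≤ c ∧ 0 < c ∧ c < 1 ∧ hcF d lam (hcF d lam c) = c := by
  have hinner : ∀ q ∈ Icc b 1, (1:ℝ) + lam * q ^ (d-1) ≠ 0 := by
    intro q hq
    have hq0 : 0 ≤ q := le_trans hb0.le hq.1
    have := mul_nonneg hl0.le (pow_nonneg hq0 (d-1))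
    intro h; linarith
  have hic : ContinuousOn (fun q : ℝ => 1 / (1 + lam * q ^ (d-1))) (Icc b 1) :=
    ContinuousOn.div continuousOn_const (by fun_prop) hinner
  have hcont : ContinuousOn (fun q => hcF d lam (hcF d lam q) - q) (Icc b 1) := by
    apply ContinuousOn.sub _ continuousOn_id
    simp only [hcF]
    apply ContinuousOn.div continuousOn_const
    · exact ContinuousOn.add continuousOn_const (continuousOn_const.mul (hic.pow _))
    · intro q hq
      have hq0 : 0 ≤ q := le_trans hb0.le hq.1
      have hpos : 0 < 1 + lam * q ^ (d-1) := by
        have := mul_nonneg hl0.le (pow_nonneg hq0 (d-1)); linarith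
      have h7 : 0 ≤ (1 / (1 + lam * q ^ (d-1))) ^ (d-1) := by positivity
      have := mul_nonneg hl0.le h7
      intro h; linarith
  have hg1 : hcF d lam (hcF d lam 1) - 1 < 0 := by
    have h8 : 0 < hcF d lam 1 := hcF_pos d hl0.le zero_le_one
    have := hcF_lt_one d hl0 h8
    linarith
  have hmem : (0:ℝ) ∈ Icc (hcF d lam (hcF d lam 1) - 1) (hcF d lam (hcF d lam b) - b) :=
    ⟨hg1.le, by linarith⟩
  obtain ⟨c, hcmem, hc⟩ := intermediate_value_Icc' hb1.le hcont hmem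
  have hc' : hcF d lam (hcF d lam c) - c = 0 := hc
  have hcfix : hcF d lam (hcF d lam c) = c := by linarith
  have hc1 : c < 1 := by
    rcases lt_or_eq_of_le hcmem.2 with h | h
    · exact h
    · exfalso; rw [h] at hc'; linarith
  exact ⟨c, hcmem.1, lt_of_lt_of_le hb0 hcmem.1, hc1, hcfix⟩

lemma qp_ev (d : ℕ) (hd : 3 ≤ d) (qp : ℝ → ℝ)
    (hqp : ∀ lam : ℝ, hcLamc d < lam →
      qp lam ∈ Ioo (0:ℝ) 1 ∧ hcF d lam (hcF d lam (qp lam)) = qp lam ∧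
      ∀ q ∈ Ioo (0:ℝ) 1, hcF d lam (hcF d lam q) = q → q ≤ qp lam)
    (a : ℝ) (ha : a < 1) : ∀ᶠ lam in atTop, a < qp lam := by
  obtain ⟨b, hab, hb0, hb1⟩ : ∃ b, a < b ∧ 0 < b ∧ b < 1 := by
    refine ⟨(max a 0 + 1)/2, ?_, ?_, ?_⟩
    · have := le_max_left a 0
      have := max_lt ha one_pos
      linarith
    · have := le_max_right a 0; linarith
    · have := max_lt ha one_pos; linarith
  filter_upwards [eventually_ge_atTop (max (max (hcLamc d + 1) 1) (b/((1-b)*b^((d-1)*(d-1)))))]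
    with lam hlam
  have hlamc : hcLamc d < lam :=
    lt_of_lt_of_le (by linarith) (le_trans (le_max_left _ _) (le_trans (le_max_left _ _) hlam))
  have hl1 : (1:ℝ) ≤ lam := le_trans (le_trans (le_max_right _ _) (le_max_left _ _)) hlam
  have hlK : b/((1-b)*b^((d-1)*(d-1))) ≤ lam := le_trans (le_max_right _ _) hlam
  have hGb := hcFF_ge d hd hb0 hb1 hl1 hlK
  obtain ⟨c, hbc, hc0, hc1, hcfix⟩ := hcFF_fixed d hd hb0 hb1 (by linarith) hGb
  have := (hqp lam hlamc).2.2 c ⟨hc0, hc1⟩ hcfix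
  linarith

theorem stmt9 (d : ℕ) (hd : 3 ≤ d) (qp qm : ℝ → ℝ)
    (hqp : ∀ lam : ℝ, hcLamc d < lam →
      qp lam ∈ Ioo (0:ℝ) 1 ∧ hcF d lam (hcF d lam (qp lam)) = qp lam ∧
      ∀ q ∈ Ioo (0:ℝ) 1, hcF d lam (hcF d lam q) = q → q ≤ qp lam)
    (hqm : ∀ lam : ℝ, hcLamc d < lam → qm lam = hcF d lam (qp lam)) :
    Tendsto qp atTop (nhds 1) ∧
    Tendsto qm atTop (nhds 0) ∧
    Tendsto (fun lam => hcPhi d lam (qp lam) (qm lam) - (1/2) * Real.log (1 + lam))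
      atTop (nhds 0) := by
  have hevc : ∀ᶠ lam in atTop, hcLamc d < lam := eventually_gt_atTop _
  -- qp → 1
  have hqpT : Tendsto qp atTop (nhds 1) := by
    rw [tendsto_order]
    constructor
    · intro a ha; exact qp_ev d hd qp hqp a ha
    · intro b hb
      filter_upwards [hevc] with lam hlam
      exact lt_trans (hqp lam hlam).1.2 hb
  -- log qp → 0
  have hlogqp : Tendsto (fun lam => Real.log (qp lam)) atTop (nhds 0) := by
    have := (Real.continuousAt_log one_ne_zero).tendsto.comp hqpT
    simpa [Real.log_one, Function.comp_def] using this
  -- main eventual facts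
  have hev : ∀ᶠ lam in atTop, hcLamc d < lam ∧ 1 ≤ lam ∧ 1/2 < qp lam :=
    (hevc.and (eventually_ge_atTop 1)).and (qp_ev d hd qp hqp (1/2) (by norm_num))
      |>.mono (fun lam h => ⟨h.1.1, h.1.2, h.2⟩)
  -- qm bounds
  have hqmB : ∀ᶠ lam in atTop,
      0 < qm lam ∧ qm lam < 1 ∧ qm lam ≤ 2^(d-1)/lam := by
    filter_upwards [hev] with lam ⟨hc, hl1, hhalf⟩
    have hl0 : (0:ℝ) < lam := by linarith
    have hqp0 : 0 < qp lam := (hqp lam hc).1.1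
    rw [hqm lam hc]
    refine ⟨hcF_pos d hl0.le hqp0.le, hcF_lt_one d hl0 hqp0, ?_⟩
    have hp : (1/2:ℝ)^(d-1) ≤ (qp lam)^(d-1) := pow_le_pow_left₀ (by norm_num) hhalf.le _
    have h1 : lam * (1/2:ℝ)^(d-1) ≤ 1 + lam * (qp lam)^(d-1) := by
      have := mul_le_mul_of_nonneg_left hp hl0.le
      linarith
    have h2 : (0:ℝ) < lam * (1/2:ℝ)^(d-1) := by positivity
    have := one_div_le_one_div_of_le h2 h1
    rw [hcF]
    calc 1 / (1 + lam * qp lam ^ (d-1)) ≤ 1 / (lam * (1/2:ℝ)^(d-1)) := this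
      _ = 2^(d-1)/lam := by
          rw [div_pow, one_pow]
          rw [eq_div_iff (ne_of_gt hl0)]
          field_simp
  -- qm → 0
  have h2l : Tendsto (fun lam : ℝ => (2:ℝ)^(d-1)/lam) atTop (nhds 0) :=
    tendsto_const_nhds.div_atTop tendsto_id
  have hqmT : Tendsto qm atTop (nhds 0) := by
    apply squeeze_zero' (hqmB.mono (fun lam h => h.1.le)) (hqmB.mono (fun lam h => h.2.2)) h2l
  refine ⟨hqpT, hqmT, ?_⟩
  -- Part C
  have hf1 : Tendsto (fun lam => (1/2) * (Real.log (1 + lam * (qp lam)^d)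
      - Real.log (1 + lam))) atTop (nhds 0) := by
    apply tendsto_of_tendsto_of_tendsto_of_le_of_le'
      (g := fun lam => (1/2) * ((d:ℝ) * Real.log (qp lam))) (h := fun _ => (0:ℝ))
    · simpa using (hlogqp.const_mul (d:ℝ)).const_mul (1/2:ℝ)
    · exact tendsto_const_nhds
    · filter_upwards [hev] with lam ⟨hc, hl1, _⟩
      have hqp0 : 0 < qp lam := (hqp lam hc).1.1
      have hqp1 : qp lam < 1 := (hqp lam hc).1.2
      have hl0 : (0:ℝ) < lam := by linarith
      have hpd : 0 < (qp lam)^d := pow_pos hqp0 d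
      have hpd1 : (qp lam)^d ≤ 1 := pow_le_one₀ hqp0.le hqp1.le
      have hmul : (qp lam)^d * (1 + lam) ≤ 1 + lam * (qp lam)^d := by nlinarith
      have hlog := Real.log_le_log (by positivity) hmul
      rw [Real.log_mul (ne_of_gt hpd) (by linarith), Real.log_pow] at hlog
      have : (d:ℝ) * Real.log (qp lam) ≤ Real.log (1 + lam * (qp lam)^d)
          - Real.log (1 + lam) := by push_cast at hlog ⊢; linarith
      linarith
    · filter_upwards [hev] with lam ⟨hc, hl1, _⟩
      have hqp0 : 0 < qp lam := (hqp lam hc).1.1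
      have hqp1 : qp lam < 1 := (hqp lam hc).1.2
      have hl0 : (0:ℝ) < lam := by linarith
      have hpd1 : (qp lam)^d ≤ 1 := pow_le_one₀ hqp0.le hqp1.le
      have hlog := Real.log_le_log (show (0:ℝ) < 1 + lam * (qp lam)^d by positivity)
        (show 1 + lam * (qp lam)^d ≤ 1 + lam by nlinarith)
      linarith
  have hf2 : Tendsto (fun lam => (1/2) * Real.log (1 + lam * (qm lam)^d)) atTop (nhds 0) := by
    apply tendsto_of_tendsto_of_tendsto_of_le_of_le'
      (g := fun _ => (0:ℝ)) (h := fun lam => (1/2) * (2^((d-1)*d)/lam))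
    · exact tendsto_const_nhds
    · simpa using (tendsto_const_nhds.div_atTop (tendsto_id (α := ℝ))).const_mul (1/2:ℝ)
    · filter_upwards [hev, hqmB] with lam ⟨hc, hl1, _⟩ ⟨hm0, hm1, hmb⟩
      have hl0 : (0:ℝ) < lam := by linarith
      have : (0:ℝ) ≤ lam * (qm lam)^d := by positivity
      have := Real.log_nonneg (by linarith : (1:ℝ) ≤ 1 + lam * (qm lam)^d)
      linarith
    · filter_upwards [hev, hqmB] with lam ⟨hc, hl1, _⟩ ⟨hm0, hm1, hmb⟩
      have hl0 : (0:ℝ) < lam := by linarith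
      have hy : lam * (qm lam)^d ≤ 2^((d-1)*d)/lam := by
        have hp : (qm lam)^d ≤ (2^(d-1)/lam)^d := pow_le_pow_left₀ hm0.le hmb d
        have h1 : lam * (qm lam)^d ≤ lam * (2^((d-1)*d)/lam^d) := by
          rw [div_pow, ← pow_mul] at hp
          exact mul_le_mul_of_nonneg_left hp hl0.le
        have hld : lam * lam ≤ lam^d := by
          calc lam * lam ≤ lam^(d-1) * lam := by
                have := le_self_pow₀ hl1 (show d - 1 ≠ 0 by omega)
                nlinarith
            _ = lam^d := by rw [← pow_succ]; congr 1; omega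
        have h2 : lam * (2^((d-1)*d)/lam^d) ≤ 2^((d-1)*d)/lam := by
          rw [mul_div_assoc', div_le_div_iff₀ (by positivity) hl0]
          have h2p : (0:ℝ) < 2^((d-1)*d) := by positivity
          nlinarith
        linarith
      have hlog := Real.log_le_sub_one_of_pos
        (show (0:ℝ) < 1 + lam * (qm lam)^d by positivity)
      linarith
  have hf3 : Tendsto (fun lam => -((d:ℝ)/2) * Real.log (qp lam + qm lam
      - qp lam * qm lam)) atTop (nhds 0) := by
    apply tendsto_of_tendsto_of_tendsto_of_le_of_le'
      (g := fun _ => (0:ℝ)) (h := fun lam => -((d:ℝ)/2) * Real.log (qp lam))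
    · exact tendsto_const_nhds
    · simpa using hlogqp.const_mul (-((d:ℝ)/2))
    · filter_upwards [hev, hqmB] with lam ⟨hc, hl1, _⟩ ⟨hm0, hm1, hmb⟩
      have hqp0 : 0 < qp lam := (hqp lam hc).1.1
      have hqp1 : qp lam < 1 := (hqp lam hc).1.2
      have hs1 : qp lam + qm lam - qp lam * qm lam ≤ 1 := by nlinarith
      have hlog := Real.log_nonpos (by nlinarith) hs1
      have hd0 : (0:ℝ) ≤ (d:ℝ)/2 := by positivity
      nlinarith
    · filter_upwards [hev, hqmB] with lam ⟨hc, hl1, _⟩ ⟨hm0, hm1, hmb⟩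
      have hqp0 : 0 < qp lam := (hqp lam hc).1.1
      have hqp1 : qp lam < 1 := (hqp lam hc).1.2
      have hsl : qp lam ≤ qp lam + qm lam - qp lam * qm lam := by nlinarith
      have hlog := Real.log_le_log hqp0 hsl
      have hd0 : (0:ℝ) ≤ (d:ℝ)/2 := by positivity
      nlinarith
  have := (hf1.add hf2).add hf3
  simp only [add_zero] at this
  apply this.congr
  intro lam
  unfold hcPhi
  ring
end
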